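/- arXiv:0904.3827 — 11 statements merged into one kernel-verified Lean document; each statement's English description precedes it below -/
import Mathlib

section
/- The degree of the field extension K/k equals the order of the Galois group of α over k: dim_k K = |G|. -/
open MvPolynomial Polynomial

variable (k : Type*) {K : Type*} [Field k] [Field K] [Algebra k K] {n : ℕ}

/-- The ideal of `α`-relations. -/
noncomputable def relIdeal (α : Fin n → K) : Ideal (MvPolynomial (Fin n) k) :=
  RingHom.ker (MvPolynomial.aeval α : MvPolynomial (Fin n) k →ₐ[k] K)

/-- The Galois group of `α` over `k`: permutations stabilizing the ideal of relations. -/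
def galoisGroup (α : Fin n → K) : Subgroup (Equiv.Perm (Fin n)) where
  carrier := {σ | MvPolynomial.rename ⇑σ '' (relIdeal k α : Set (MvPolynomial (Fin n) k))
      = (relIdeal k α : Set (MvPolynomial (Fin n) k))}
  one_mem' := by
    have h : ∀ p : MvPolynomial (Fin n) k, rename ⇑(1 : Equiv.Perm (Fin n)) p = p := by
      intro p; simp [Equiv.Perm.coe_one, rename_id]
    simp only [Set.mem_setOf_eq]
    rw [Set.image_congr' h]
    exact Set.image_id _
  mul_mem' := by
    intro σ τ hσ hτ
    simp only [Set.mem_setOf_eq] at *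
    have h : ∀ p : MvPolynomial (Fin n) k,
        rename ⇑(σ * τ) p = rename ⇑σ (rename ⇑τ p) := by
      intro p; rw [rename_rename]; rfl
    rw [Set.image_congr' h]
    calc (fun p => rename ⇑σ (rename ⇑τ p)) '' (relIdeal k α : Set (MvPolynomial (Fin n) k))
        = rename ⇑σ '' (rename ⇑τ '' (relIdeal k α : Set (MvPolynomial (Fin n) k))) :=
          (Set.image_comp _ _ _)
      _ = _ := by rw [hτ, hσ]
  inv_mem' := by
    intro σ hσ
    simp only [Set.mem_setOf_eq] at *
    conv_lhs => rw [← hσ]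
    rw [← Set.image_comp]
    have h : ∀ p : MvPolynomial (Fin n) k,
        (rename ⇑σ⁻¹ ∘ rename ⇑σ) p = p := by
      intro p
      simp only [Function.comp_apply, rename_rename]
      have : (⇑σ⁻¹ ∘ ⇑σ) = id := by
        funext i; simp
      rw [this, rename_id]; rfl
    rw [Set.image_congr' h]
    exact Set.image_id _

-- aux lemma to insert before the theorem
lemma image_relIdeal_eq_of_comm (α : Fin n → K) (τ : K ≃ₐ[k] K) (p : Equiv.Perm (Fin n))
    (hp : ∀ i, α (p i) = τ (α i)) :
    rename ⇑p '' (relIdeal k α : Set (MvPolynomial (Fin n) k)) = relIdeal k α := by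
  have hmem : ∀ (e : K ≃ₐ[k] K) (q : Fin n → Fin n), (∀ i, α (q i) = e (α i)) →
      ∀ P ∈ relIdeal k α, rename q P ∈ relIdeal k α := by
    intro e q hq P hP
    have hP0 : aeval α P = 0 := hP
    show aeval α (rename q P) = 0
    rw [aeval_rename]
    have h4 : (α ∘ q) = fun i => e (α i) := funext fun i => by simp [hq i]
    have h2 := comp_aeval_apply (f := α) (e : K →ₐ[k] K) P
    change e (aeval α P) = aeval (fun i => e (α i)) P at h2
    rw [h4, ← h2, hP0, map_zero]
  apply Set.Subset.antisymm
  · rintro x ⟨P, hP, rfl⟩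
    exact hmem τ ⇑p (fun i => hp i) P hP
  · intro x hx
    refine ⟨rename ⇑p⁻¹ x, ?_, ?_⟩
    · refine hmem τ.symm ⇑p⁻¹ (fun i => ?_) x hx
      apply τ.injective
      rw [AlgEquiv.apply_symm_apply, ← hp, ← Equiv.Perm.mul_apply, mul_inv_cancel, Equiv.Perm.one_apply]
    · rw [rename_rename]
      have : (⇑p ∘ ⇑p⁻¹) = id := funext fun i => by simp
      rw [this, rename_id]; rfl

/-- `dim_k K = |G|`. -/
theorem finrank_eq_card_galoisGroup (α : Fin n → K) (hinj : Function.Injective α)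
    (hcoeff : ∀ m : ℕ, (∏ i : Fin n, (Polynomial.X - Polynomial.C (α i)) : K[X]).coeff m ∈ (algebraMap k K).range)
    (hgen : Algebra.adjoin k (Set.range α) = ⊤) :
    Module.finrank k K = Nat.card (galoisGroup k α) := by
  classical
  set f : K[X] := ∏ i : Fin n, (Polynomial.X - Polynomial.C (α i)) with hf
  -- lift f to k
  obtain ⟨g, hg⟩ : ∃ g : k[X], g.map (algebraMap k K) = f := by
    have : f ∈ Polynomial.lifts (algebraMap k K) := by
      rw [Polynomial.lifts_iff_coeff_lifts]
      intro m; exact hcoeff m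
    exact (Polynomial.mem_lifts f).mp this
  have root_eval : ∀ x : K, Polynomial.eval x f = ∏ j, (x - α j) := by
    intro x; rw [hf, Polynomial.eval_prod]; simp
  have hroot : ∀ i, Polynomial.eval (α i) f = 0 := by
    intro i; rw [root_eval]
    exact Finset.prod_eq_zero (Finset.mem_univ i) (sub_self _)
  -- splitting field
  have hsplits : Polynomial.Splits (g.map (algebraMap k K)) := by
    have : Polynomial.Splits f := by
      rw [hf]
      exact Polynomial.Splits.prod fun i _ => Polynomial.Splits.X_sub_C _
    rw [← hg] at this
    exact this
  have hfne : f ≠ 0 := by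
    rw [hf]
    exact Monic.ne_zero (Polynomial.monic_prod_of_monic _ _ fun i _ => Polynomial.monic_X_sub_C _)
  have hrootSet : g.rootSet K = Set.range α := by
    ext x
    rw [Polynomial.mem_rootSet, Polynomial.aeval_def, ← Polynomial.eval_map, hg]
    constructor
    · rintro ⟨-, hx⟩
      rw [root_eval] at hx
      obtain ⟨j, -, hj⟩ := Finset.prod_eq_zero_iff.mp hx
      exact ⟨j, (sub_eq_zero.mp hj).symm⟩
    · rintro ⟨j, rfl⟩
      refine ⟨fun h => hfne ?_, hroot j⟩
      rw [← hg, h, Polynomial.map_zero]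
  haveI hsf : Polynomial.IsSplittingField k K g := by
    constructor
    · exact hsplits
    · rw [hrootSet, hgen]
  have hsep : g.Separable := by
    rw [← Polynomial.separable_map (algebraMap k K), hg, hf]
    exact Polynomial.separable_prod_X_sub_C_iff.mpr hinj
  haveI : FiniteDimensional k K := Polynomial.IsSplittingField.finiteDimensional K g
  haveI : IsGalois k K := IsGalois.of_separable_splitting_field hsep
  -- every automorphism permutes the roots
  have key : ∀ (τ : K ≃ₐ[k] K) (i : Fin n), ∃ j, τ (α i) = α j := by
    intro τ i
    have h1 : (Polynomial.aeval (α i)) g = 0 := by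
      rw [Polynomial.aeval_def, ← Polynomial.eval_map, hg]; exact hroot i
    have h2 : Polynomial.eval (τ (α i)) f = 0 := by
      have h3 := Polynomial.aeval_algHom_apply (τ : K →ₐ[k] K) (α i) g
      rw [h1, map_zero] at h3
      rwa [Polynomial.aeval_def, ← Polynomial.eval_map, hg] at h3
    rw [root_eval] at h2
    obtain ⟨j, -, hj⟩ := Finset.prod_eq_zero_iff.mp h2
    exact ⟨j, sub_eq_zero.mp hj⟩
  choose m hm using key
  have minj : ∀ τ, Function.Injective (m τ) := by
    intro τ i j h
    exact hinj (τ.injective (by rw [hm, hm, h]))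
  have mbij : ∀ τ, Function.Bijective (m τ) := fun τ =>
    Finite.injective_iff_bijective.mp (minj τ)
  -- the map from automorphisms to the Galois group
  set F : (K ≃ₐ[k] K) → (galoisGroup k α) := fun τ =>
    ⟨Equiv.ofBijective (m τ) (mbij τ),
      image_relIdeal_eq_of_comm k α τ (Equiv.ofBijective (m τ) (mbij τ))
        (fun i => (hm τ i).symm)⟩ with hF
  have hφs : Function.Surjective (aeval α : MvPolynomial (Fin n) k →ₐ[k] K) := by
    rw [← AlgHom.range_eq_top, ← Algebra.adjoin_range_eq_range_aeval k α, hgen]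
  have Finj : Function.Injective F := by
    intro τ τ' h
    have hmm : ∀ i, m τ i = m τ' i := by
      intro i
      have := congrArg (fun s : galoisGroup k α => (s : Equiv.Perm (Fin n)) i) h
      simpa [hF] using this
    have heq : ∀ i, τ (α i) = τ' (α i) := fun i => by rw [hm, hm, hmm]
    ext x
    have : Algebra.adjoin k (Set.range α) ≤ AlgHom.equalizer (τ : K →ₐ[k] K) (τ' : K →ₐ[k] K) := by
      rw [Algebra.adjoin_le_iff]
      rintro y ⟨i, rfl⟩
      exact heq i
    have hx : x ∈ AlgHom.equalizer (τ : K →ₐ[k] K) (τ' : K →ₐ[k] K) := by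
      apply this; rw [hgen]; trivial
    exact hx
  have Fsurj : Function.Surjective F := by
    rintro ⟨σ, hσ⟩
    set ψ : MvPolynomial (Fin n) k →ₐ[k] K := (MvPolynomial.aeval α).comp (rename ⇑σ) with hψ
    have hψX : ∀ i, ψ (X i) = α (σ i) := by intro i; simp [hψ]
    have hkerψ : RingHom.ker ψ = relIdeal k α := by
      ext P
      have h1 : P ∈ RingHom.ker ψ ↔ rename ⇑σ P ∈ relIdeal k α := Iff.rfl
      rw [h1]
      constructor
      · intro h
        have h2 : rename ⇑σ P ∈ rename ⇑σ '' (relIdeal k α : Set (MvPolynomial (Fin n) k)) := by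
          rw [hσ]; exact h
        obtain ⟨Q, hQ, hQe⟩ := h2
        rwa [← rename_injective _ σ.injective hQe]
      · intro h
        have : rename ⇑σ P ∈ rename ⇑σ '' (relIdeal k α : Set (MvPolynomial (Fin n) k)) :=
          Set.mem_image_of_mem _ h
        rwa [hσ] at this
    have hψs : Function.Surjective ψ := by
      rw [← AlgHom.range_eq_top, eq_top_iff, ← hgen, Algebra.adjoin_le_iff]
      rintro y ⟨j, rfl⟩
      exact ⟨X (σ⁻¹ j), by show ψ _ = _; rw [hψX, ← Equiv.Perm.mul_apply, mul_inv_cancel, Equiv.Perm.one_apply]⟩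
    let e1 := Ideal.quotientKerAlgEquivOfSurjective hφs
    let e2 := Ideal.quotientKerAlgEquivOfSurjective hψs
    let e3 : (MvPolynomial (Fin n) k ⧸ relIdeal k α) ≃ₐ[k] _ :=
      Ideal.quotientEquivAlgOfEq k hkerψ.symm
    have he1 : ∀ P, e1 (Ideal.Quotient.mk _ P) = aeval α P := fun P => rfl
    have he2 : ∀ P, e2 (Ideal.Quotient.mk _ P) = ψ P := fun P => rfl
    set τ : K ≃ₐ[k] K := (e1.symm.trans e3).trans e2 with hτ
    have hτα : ∀ i, τ (α i) = α (σ i) := by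
      intro i
      have h4 : e1.symm (α i) = Ideal.Quotient.mk _ (X i) := by
        rw [AlgEquiv.symm_apply_eq, he1, MvPolynomial.aeval_X]
      have h5 : e3 ((Ideal.Quotient.mk (RingHom.ker (MvPolynomial.aeval α : MvPolynomial (Fin n) k →ₐ[k] K))) (X i))
          = Ideal.Quotient.mk (RingHom.ker ψ) (X i) :=
        Ideal.quotientEquivAlgOfEq_mk k hkerψ.symm (X i)
      rw [hτ]
      simp only [AlgEquiv.trans_apply]
      show e2 (e3 (e1.symm (α i))) = α (σ i)
      rw [h4]
      exact (congrArg e2 h5).trans (by rw [he2, hψX])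
    refine ⟨τ, ?_⟩
    apply Subtype.ext
    apply Equiv.ext
    intro i
    apply hinj
    show α (m τ i) = α (σ i)
    rw [← hm, hτα]
  rw [Nat.card_congr (Equiv.ofBijective F ⟨Finj, Fsurj⟩).symm,
    IsGalois.card_aut_eq_finrank]
end

section
/- Every β ∈ K is algebraic over k, and the image in K[X] of its minimal polynomial over k equals ∏_{γ ∈ {Φ(g)(β) : g ∈ G}} (X − γ), the product being taken over the (finite) set of distinct conjugates Φ(g)(β) of β under the Galois group G. -/
open MvPolynomial Polynomial

variable (k : Type*) {K : Type*} [Field k] [Field K] [Algebra k K] {n : ℕ}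

/-- every `β ∈ K` is algebraic over `k` and its minimal polynomial is the
product over the distinct Galois conjugates of `β`. -/
theorem minpoly_eq_prod_conjugates (α : Fin n → K) (hinj : Function.Injective α)
    (hcoeff : ∀ m : ℕ, (∏ i : Fin n, (Polynomial.X - Polynomial.C (α i)) : K[X]).coeff m ∈
      (algebraMap k K).range)
    (hgen : Algebra.adjoin k (Set.range α) = ⊤)
    (Φ : Equiv.Perm (Fin n) → (K ≃ₐ[k] K))
    (hΦ : ∀ σ ∈ galoisGroup k α, ∀ i : Fin n, Φ σ (α i) = α (σ i))
    (β : K) :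
    IsAlgebraic k β ∧
      (minpoly k β).map (algebraMap k K) =
        ∏ γ ∈ (Set.toFinite (Set.range (fun g : galoisGroup k α => Φ (g : Equiv.Perm (Fin n)) β))).toFinset,
          (Polynomial.X - Polynomial.C γ) := by
  classical
  set f : K[X] := ∏ i : Fin n, (Polynomial.X - Polynomial.C (α i)) with hf
  have hfmonic : f.Monic := monic_prod_of_monic _ _ fun i _ => monic_X_sub_C _
  -- lift f to k[X]
  have hlift : f ∈ Polynomial.lifts (algebraMap k K) := by
    rw [Polynomial.lifts_iff_coeff_lifts]
    intro m
    exact hcoeff m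
  obtain ⟨f₀, hmap, -, hmon⟩ := Polynomial.lifts_and_degree_eq_and_monic hlift hfmonic
  -- f₀ is separable
  have hsep : f₀.Separable := by
    rw [← Polynomial.separable_map (algebraMap k K), hmap, hf]
    exact Polynomial.separable_prod_X_sub_C_iff.mpr hinj
  -- roots of f₀ in K are exactly range α
  have hroot : ∀ γ : K, (Polynomial.aeval γ) f₀ = 0 ↔ ∃ i, α i = γ := by
    intro γ
    rw [Polynomial.aeval_def, ← Polynomial.eval_map, hmap, hf, Polynomial.eval_prod]
    simp only [Polynomial.eval_sub, Polynomial.eval_X, Polynomial.eval_C]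
    rw [Finset.prod_eq_zero_iff]
    constructor
    · rintro ⟨i, -, hi⟩; exact ⟨i, (sub_eq_zero.mp hi).symm⟩
    · rintro ⟨i, hi⟩; exact ⟨i, Finset.mem_univ i, by rw [hi, sub_self]⟩
  have hf₀ne : f₀ ≠ 0 := hmon.ne_zero
  haveI hsf : Polynomial.IsSplittingField k K f₀ := by
    constructor
    · rw [hmap, hf]
      exact Polynomial.Splits.prod fun i _ => Polynomial.Splits.X_sub_C _
    · have : f₀.rootSet K = Set.range α := by
        ext γ
        rw [Polynomial.mem_rootSet]
        constructor
        · rintro ⟨-, h⟩; obtain ⟨i, hi⟩ := (hroot γ).mp h; exact ⟨i, hi⟩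
        · rintro ⟨i, hi⟩; exact ⟨hf₀ne, (hroot γ).mpr ⟨i, hi⟩⟩
      rw [this]; exact hgen
  haveI : FiniteDimensional k K := Polynomial.IsSplittingField.finiteDimensional K f₀
  haveI : IsGalois k K := IsGalois.of_separable_splitting_field hsep
  have halg : IsAlgebraic k β := (IsIntegral.of_finite k β).isAlgebraic
  refine ⟨halg, ?_⟩
  -- minpoly facts
  set p : k[X] := minpoly k β with hp
  have hpmonic : p.Monic := minpoly.monic halg.isIntegral
  have hpsplits : Polynomial.Splits (p.map (algebraMap k K)) := Normal.splits inferInstance β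
  have hpsep : p.Separable := Algebra.IsSeparable.isSeparable k β
  have hnodup : (p.map (algebraMap k K)).roots.Nodup :=
    Polynomial.nodup_roots hpsep.map
  -- the key set equality
  have hsetEq : (Set.toFinite (Set.range (fun g : galoisGroup k α =>
      Φ (g : Equiv.Perm (Fin n)) β))).toFinset = (p.map (algebraMap k K)).roots.toFinset := by
    ext γ
    simp only [Set.Finite.mem_toFinset, Set.mem_range, Multiset.mem_toFinset]
    rw [Polynomial.mem_roots (Polynomial.map_ne_zero (minpoly.ne_zero halg.isIntegral))]
    constructor
    · rintro ⟨g, rfl⟩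
      show Polynomial.eval _ _ = 0
      rw [Polynomial.eval_map, ← Polynomial.aeval_def, Polynomial.aeval_algHom_apply,
        minpoly.aeval, map_zero]
    · intro hγ
      have hγ' : (Polynomial.aeval γ) p = 0 := by
        rwa [Polynomial.aeval_def, ← Polynomial.eval_map]
      obtain ⟨φ, hφβ⟩ := minpoly.exists_algEquiv_of_root' halg hγ'
      -- φ permutes the α i
      have hperm : ∀ i : Fin n, ∃ j, α j = φ (α i) := by
        intro i
        refine (hroot _).mp ?_
        have h0 : (Polynomial.aeval (α i)) f₀ = 0 := (hroot _).mpr ⟨i, rfl⟩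
        rw [Polynomial.aeval_algHom_apply, h0, map_zero]
      choose τ hτ using hperm
      have hτinj : Function.Injective τ := by
        intro i j hij
        exact hinj (φ.injective (by rw [← hτ i, ← hτ j, hij]))
      have hτbij : Function.Bijective τ := Finite.injective_iff_bijective.mp hτinj
      set σ : Equiv.Perm (Fin n) := Equiv.ofBijective τ hτbij with hσ
      -- key : aeval α ∘ rename σ = φ ∘ aeval α
      have hkey : ∀ P : MvPolynomial (Fin n) k,
          MvPolynomial.aeval α (rename ⇑σ P) = φ (MvPolynomial.aeval α P) := by
        intro P
        rw [MvPolynomial.aeval_rename]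
        have : (α ∘ ⇑σ) = ⇑φ ∘ α := by funext i; exact hτ i
        rw [this]
        rw [show (MvPolynomial.aeval (⇑φ ∘ α)) P
            = (φ.toAlgHom.comp (MvPolynomial.aeval α)) P from ?_]
        · rfl
        · rw [MvPolynomial.comp_aeval]; rfl
      have hmem : ∀ P : MvPolynomial (Fin n) k,
          P ∈ relIdeal k α ↔ rename ⇑σ P ∈ relIdeal k α := by
        intro P
        simp only [relIdeal, RingHom.mem_ker]
        rw [hkey]
        constructor
        · intro h; rw [show (MvPolynomial.aeval α) P = (0:K) from h, map_zero]
        · intro h; exact φ.injective (by rwa [map_zero])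
      have hσmem : σ ∈ galoisGroup k α := by
        show rename ⇑σ '' (relIdeal k α : Set (MvPolynomial (Fin n) k)) = _
        apply Set.Subset.antisymm
        · rintro _ ⟨P, hP, rfl⟩
          exact SetLike.mem_coe.mpr ((hmem P).mp (SetLike.mem_coe.mp hP))
        · intro Q hQ
          have h1 : rename ⇑σ (rename ⇑σ⁻¹ Q) = Q := by
            rw [rename_rename]
            have : (⇑σ ∘ ⇑σ⁻¹) = id := by funext i; simp
            rw [this, rename_id]; rfl
          refine ⟨rename ⇑σ⁻¹ Q, ?_, h1⟩
          rw [SetLike.mem_coe, hmem, h1]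
          exact SetLike.mem_coe.mp hQ
      -- Φ σ = φ on all of K
      have hΦσ : ∀ x : K, Φ σ x = φ x := by
        have := AlgHom.ext_of_adjoin_eq_top hgen
          (φ₁ := (Φ σ).toAlgHom) (φ₂ := φ.toAlgHom) ?_
        · intro x; exact AlgHom.congr_fun this x
        · rintro _ ⟨i, rfl⟩
          show Φ σ (α i) = φ (α i)
          rw [hΦ σ hσmem i]; exact hτ i
      exact ⟨⟨σ, hσmem⟩, by rw [hΦσ β, hφβ]⟩
  have h1 := Polynomial.Splits.eq_prod_roots_of_monic hpsplits
    (hpmonic.map (algebraMap k K))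
  rw [hsetEq, Finset.prod_eq_multiset_prod, Multiset.toFinset_val, hnodup.dedup]
  exact h1
end

section
/- (Galois's theorem) For β ∈ K, β lies in the image of k in K (i.e. β ∈ k) if and only if Φ(g)(β) = β for every g ∈ G. -/
open MvPolynomial Polynomial

variable (k : Type*) {K : Type*} [Field k] [Field K] [Algebra k K] {n : ℕ}

section AuxGalois

variable {k : Type*} {K : Type*} [Field k] [Field K] [Algebra k K] {n : ℕ}

/-- If `τ` is a `k`-automorphism of `K` and `σ` a permutation with `τ (α i) = α (σ i)`,
then `rename σ` maps the ideal of relations into itself. -/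
lemma aux_rename_image_subset (α : Fin n → K) (τ : K ≃ₐ[k] K) (σ : Equiv.Perm (Fin n))
    (h : ∀ i, τ (α i) = α (σ i)) :
    MvPolynomial.rename ⇑σ '' (relIdeal k α : Set (MvPolynomial (Fin n) k))
      ⊆ (relIdeal k α : Set (MvPolynomial (Fin n) k)) := by
  rintro _ ⟨p, hp, rfl⟩
  have hp0 : aeval α p = 0 := hp
  show rename ⇑σ p ∈ relIdeal k α
  show aeval α (rename ⇑σ p) = 0
  rw [aeval_rename]
  have hc : (α ∘ ⇑σ) = (fun i => τ (α i)) := by funext i; simp [h i]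
  rw [hc]
  have := congrFun (congrArg (fun (φ : MvPolynomial (Fin n) k →ₐ[k] K) => ⇑φ)
    (comp_aeval (R := k) (φ := τ.toAlgHom) (f := α))) p
  simp only [AlgHom.coe_comp, Function.comp_apply, AlgEquiv.toAlgHom_eq_coe,
    AlgHom.coe_coe] at this
  calc aeval (fun i => τ (α i)) p = τ (aeval α p) := this.symm
    _ = 0 := by rw [hp0, map_zero]

end AuxGalois

/-- Galois's theorem: `β ∈ k` iff `β` is fixed by every element of `G`. -/
theorem mem_range_algebraMap_iff_fixed (α : Fin n → K) (hinj : Function.Injective α)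
    (hcoeff : ∀ m : ℕ, (∏ i : Fin n, (Polynomial.X - Polynomial.C (α i)) : K[X]).coeff m ∈
      (algebraMap k K).range)
    (hgen : Algebra.adjoin k (Set.range α) = ⊤)
    (Φ : Equiv.Perm (Fin n) → (K ≃ₐ[k] K))
    (hΦ : ∀ σ ∈ galoisGroup k α, ∀ i : Fin n, Φ σ (α i) = α (σ i))
    (β : K) :
    β ∈ (algebraMap k K).range ↔ ∀ g ∈ galoisGroup k α, Φ g β = β := by
  classical
  constructor
  · rintro ⟨c, rfl⟩ g hg
    exact (Φ g).commutes c
  · intro hfix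
    set f : K[X] := ∏ i : Fin n, (Polynomial.X - Polynomial.C (α i)) with hf
    have hmonic : f.Monic := monic_prod_of_monic _ _ fun i _ => monic_X_sub_C _
    have hfne : f ≠ 0 := hmonic.ne_zero
    have hfprod : f = ((Finset.univ.val.map α).map fun a => Polynomial.X - Polynomial.C a).prod := by
      rw [hf, Finset.prod_eq_multiset_prod, Multiset.map_map]; rfl
    have hroots : f.roots = Finset.univ.val.map α := by
      rw [hfprod, roots_multiset_prod_X_sub_C]
    obtain ⟨g, hgmap, -⟩ := Polynomial.mem_lifts_and_degree_eq
      ((Polynomial.lifts_iff_coeff_lifts f).mpr fun m => hcoeff m)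
    have hgne : g ≠ 0 := by
      intro h0
      rw [h0, Polynomial.map_zero] at hgmap
      exact hfne hgmap.symm
    have hsep : g.Separable := by
      rw [← Polynomial.separable_map (algebraMap k K), hgmap]
      exact Polynomial.separable_prod_X_sub_C_iff.mpr hinj
    have hsplits : Polynomial.Splits (g.map (algebraMap k K)) := by
      rw [hgmap]
      exact Polynomial.Splits.prod fun i _ => Polynomial.Splits.X_sub_C _
    have haevalg : ∀ x : K, aeval x g = f.eval x := by
      intro x
      rw [Polynomial.aeval_def, Polynomial.eval₂_eq_eval_map, hgmap]
    have hevalf : ∀ x : K, f.eval x = 0 ↔ ∃ i, x = α i := by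
      intro x
      rw [hf, Polynomial.eval_prod]
      simp only [Polynomial.eval_sub, Polynomial.eval_X, Polynomial.eval_C]
      rw [Finset.prod_eq_zero_iff]
      constructor
      · rintro ⟨i, -, hi⟩; exact ⟨i, by linear_combination hi⟩
      · rintro ⟨i, hi⟩; exact ⟨i, Finset.mem_univ i, by rw [hi, sub_self]⟩
    have hrootSet : g.rootSet K = Set.range α := by
      ext x
      rw [Polynomial.mem_rootSet]
      constructor
      · rintro ⟨-, hx⟩
        obtain ⟨i, hi⟩ := (hevalf x).mp (by rw [← haevalg]; exact hx)
        exact ⟨i, hi.symm⟩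
      · rintro ⟨i, rfl⟩
        exact ⟨hgne, by rw [haevalg]; exact (hevalf _).mpr ⟨i, rfl⟩⟩
    haveI hsf : Polynomial.IsSplittingField k K g := ⟨hsplits, by rw [hrootSet, hgen]⟩
    haveI : FiniteDimensional k K := Polynomial.IsSplittingField.finiteDimensional K g
    haveI : IsGalois k K := IsGalois.of_separable_splitting_field hsep
    -- every `k`-automorphism of `K` fixes `β`
    have hall : ∀ τ : K ≃ₐ[k] K, τ β = β := by
      intro τ
      -- any automorphism permutes the roots
      have hperm : ∀ (υ : K ≃ₐ[k] K) (i : Fin n), ∃ j, υ (α i) = α j := by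
        intro υ i
        have h1 : aeval (α i) g = 0 := by
          rw [haevalg]; exact (hevalf _).mpr ⟨i, rfl⟩
        have h2 : aeval (υ (α i)) g = 0 := by
          rw [Polynomial.aeval_algHom_apply, h1, map_zero]
        have h3 : f.eval (υ (α i)) = 0 := by rw [← haevalg]; exact h2
        obtain ⟨j, hj⟩ := (hevalf _).mp h3
        exact ⟨j, hj⟩
      -- build the permutation attached to `υ`
      have hbuild : ∀ υ : K ≃ₐ[k] K, ∃ s : Fin n → Fin n,
          Function.Injective s ∧ ∀ i, υ (α i) = α (s i) := by
        intro υ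
        choose s hs using hperm υ
        refine ⟨s, ?_, hs⟩
        intro i j hij
        apply hinj
        apply υ.injective
        rw [hs i, hs j, hij]
      obtain ⟨s, hsinj, hs⟩ := hbuild τ
      let σ : Equiv.Perm (Fin n) :=
        Equiv.ofBijective s (Finite.injective_iff_bijective.mp hsinj)
      have hσ : ∀ i, τ (α i) = α (σ i) := hs
      have hσinv : ∀ i, τ.symm (α i) = α (σ⁻¹ i) := by
        intro i
        apply τ.injective
        rw [hσ (σ⁻¹ i)]
        simp
      have hsub1 := aux_rename_image_subset α τ σ hσ
      have hsub2 := aux_rename_image_subset α τ.symm σ⁻¹ hσinv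
      have hmem : σ ∈ galoisGroup k α := by
        show rename ⇑σ '' (relIdeal k α : Set (MvPolynomial (Fin n) k)) = _
        refine Set.Subset.antisymm hsub1 ?_
        intro p hp
        refine ⟨rename ⇑σ⁻¹ p, hsub2 ⟨p, hp, rfl⟩, ?_⟩
        rw [rename_rename]
        have : (⇑σ ∘ ⇑σ⁻¹) = id := by funext i; simp
        rw [this, rename_id]; rfl
      have hagree : (Φ σ).toAlgHom = τ.toAlgHom := by
        apply AlgHom.ext_of_adjoin_eq_top hgen
        rintro _ ⟨i, rfl⟩
        show Φ σ (α i) = τ (α i)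
        rw [hΦ σ hmem i, hσ i]
      have : Φ σ β = τ β := congrFun (congrArg (fun φ : K →ₐ[k] K => ⇑φ) hagree) β
      rw [← this]
      exact hfix σ hmem
    have htop : IntermediateField.fixedField (⊤ : Subgroup (K ≃ₐ[k] K)) = ⊥ := by
      rw [← IntermediateField.fixingSubgroup_bot (F := k) (E := K)]
      exact IsGalois.fixedField_fixingSubgroup ⊥
    have hmemfix : β ∈ IntermediateField.fixedField (⊤ : Subgroup (K ≃ₐ[k] K)) :=
      fun g => hall g
    rw [htop, IntermediateField.mem_bot] at hmemfix
    obtain ⟨c, hc⟩ := hmemfix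
    exact ⟨c, hc⟩
end

section
/- Assume L is finite. If the multiset of cardinalities of the orbits of G acting by left multiplication on L/H equals the multiset of cardinalities of the orbits of H acting by left multiplication on L/H, and |G| = |H|, then G and H are conjugate in L. -/
open MulAction

/-- if `L` is finite, the multisets of orbit cardinalities of `G` and of `H` on
`L/H` coincide, and `|G| = |H|`, then `G` and `H` are conjugate in `L`. -/
theorem conj_of_orbit_card_eq {L : Type*} [Group L] [Finite L] (G H : Subgroup L)
    (e : MulAction.orbitRel.Quotient G (L ⧸ H) ≃ MulAction.orbitRel.Quotient H (L ⧸ H))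
    (he : ∀ o, Nat.card o.orbit = Nat.card (e o).orbit)
    (hcard : Nat.card G = Nat.card H) :
    ∃ τ : L, Subgroup.map (MulAut.conj τ).toMonoidHom H = G := by
  -- the H-orbit of the trivial coset is a singleton
  have h1 : MulAction.orbit H ((1 : L) : L ⧸ H) = {((1 : L) : L ⧸ H)} := by
    ext x
    simp only [MulAction.mem_orbit_iff, Set.mem_singleton_iff]
    constructor
    · rintro ⟨⟨h, hh⟩, rfl⟩
      change ((h : L) • ((1 : L) : L ⧸ H)) = _
      simp [Subgroup.smul_def, QuotientGroup.eq, hh]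
    · rintro rfl
      exact ⟨1, by simp⟩
  set q : MulAction.orbitRel.Quotient H (L ⧸ H) := Quotient.mk'' ((1 : L) : L ⧸ H)
  have hq : Nat.card q.orbit = 1 := by
    have : q.orbit = {((1 : L) : L ⧸ H)} := by
      simpa [q, MulAction.orbitRel.Quotient.orbit_mk] using h1
    rw [this]; simp
  set o := e.symm q
  have ho : Nat.card o.orbit = 1 := by
    rw [he o]; simpa [o] using hq
  -- so the G-orbit of (Quotient.out o) is a singleton
  have horb : o.orbit = MulAction.orbit G (Quotient.out o) :=
    MulAction.orbitRel.Quotient.orbit_eq_orbit_out o Quotient.out_eq'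
  obtain ⟨τ⟩ := Quotient.exists_rep (Quotient.out o)
  have hτ : (τ : L ⧸ H) = (Quotient.out o) := ‹_›
  have hsub : Subsingleton o.orbit := by
    rcases Nat.card_eq_one_iff_unique.mp ho with ⟨hs, _⟩
    exact hs
  -- every g ∈ G fixes the coset τH
  have hfix : ∀ g ∈ G, ((g * τ : L) : L ⧸ H) = ((τ : L) : L ⧸ H) := by
    intro g hg
    have h1 : (⟨g, hg⟩ : G) • (Quotient.out o) ∈ o.orbit := by
      rw [horb]; exact MulAction.mem_orbit _ _
    have h2 : (Quotient.out o) ∈ o.orbit := by rw [horb]; exact MulAction.mem_orbit_self _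
    have := hsub.elim ⟨_, h1⟩ ⟨_, h2⟩
    have h3 : (⟨g, hg⟩ : G) • (Quotient.out o) = (Quotient.out o) := congrArg Subtype.val this
    rw [← hτ] at h3
    change ((g : L) • (τ : L ⧸ H)) = _ at h3
    simpa [Subgroup.smul_def, QuotientGroup.mk_mul] using h3
  -- hence G ≤ τ H τ⁻¹
  have hle : G ≤ Subgroup.map (MulAut.conj τ).toMonoidHom H := by
    intro g hg
    have := hfix g hg
    rw [QuotientGroup.eq] at this
    refine ⟨τ⁻¹ * g * τ, by simpa [mul_assoc] using H.inv_mem this, ?_⟩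
    simp [MulAut.conj_apply, mul_assoc]
  refine ⟨τ, (Subgroup.eq_of_le_of_card_ge hle ?_).symm⟩
  have : Nat.card (Subgroup.map (MulAut.conj τ).toMonoidHom H) = Nat.card H := by
    have hinj : Function.Injective (MulAut.conj τ).toMonoidHom := (MulAut.conj τ).injective
    exact (Nat.card_congr (Subgroup.equivMapOfInjective H _ hinj).toEquiv).symm
  omega
end

section
/- Let P ∈ F, H = Stab_L(P), and J = ⋂_{σ ∈ L} σHσ⁻¹ (the normal core of H in L). Then the subfield of F generated over the fixed field F^L by the orbit L·P = {σ·P : σ ∈ L} equals the fixed field F^J. -/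
open Polynomial

/-- The subfield of elements of `F` fixed by every element of the subgroup `U` of `L`. -/
def fixedSubfield (L : Type*) [Group L] (F : Type*) [Field F] [MulSemiringAction L F]
    (U : Subgroup L) : Subfield F where
  carrier := {x : F | ∀ σ ∈ U, σ • x = x}
  mul_mem' := by
    intro a b ha hb σ hσ
    rw [smul_mul', ha σ hσ, hb σ hσ]
  one_mem' := by intro σ hσ; rw [smul_one]
  add_mem' := by
    intro a b ha hb σ hσ
    rw [smul_add, ha σ hσ, hb σ hσ]
  zero_mem' := by intro σ hσ; rw [smul_zero]
  neg_mem' := by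
    intro a ha σ hσ
    rw [smul_neg, ha σ hσ]
  inv_mem' := by
    intro a ha σ hσ
    rw [smul_inv'', ha σ hσ]

/-- the subfield generated over the fixed field `F^L` by the orbit `L·P` is the
fixed field of the normal core `⋂_{σ ∈ L} σ Stab_L(P) σ⁻¹`. -/
theorem closure_orbit_eq_fixed_normalCore {F : Type*} [Field F] (L : Type*) [Group L] [Finite L]
    [MulSemiringAction L F] (hfaithful : ∀ σ τ : L, (∀ x : F, σ • x = τ • x) → σ = τ)
    (P : F) :
    Subfield.closure
        (SetLike.coe (fixedSubfield L F (⊤ : Subgroup L)) ∪ Set.range (fun σ : L => σ • P)) =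
      fixedSubfield L F
        (⨅ σ : L, Subgroup.map (MulAut.conj σ).toMonoidHom (MulAction.stabilizer L P)) := by
  haveI : FaithfulSMul L F := ⟨fun h => hfaithful _ _ h⟩
  set E := FixedPoints.subfield L F with hEdef
  set S : Set F := Set.range (fun σ : L => σ • P) with hSdef
  set K' : IntermediateField E F := IntermediateField.adjoin E S with hK'def
  set J : Subgroup L :=
    ⨅ σ : L, Subgroup.map (MulAut.conj σ).toMonoidHom (MulAction.stabilizer L P) with hJdef
  set e : L ≃* (F ≃ₐ[E] F) := FixedPoints.toAlgAutMulEquiv L F with hedef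
  have he_apply : ∀ (τ : L) (x : F), e τ x = τ • x := fun τ x => rfl
  -- characterize membership in J
  have hJ : ∀ τ : L, τ ∈ J ↔ ∀ σ : L, τ • (σ • P) = σ • P := by
    intro τ
    simp only [hJdef, Subgroup.mem_iInf, Subgroup.mem_map, MulEquiv.coe_toMonoidHom,
      MulAut.conj_apply, MulAction.mem_stabilizer_iff]
    constructor
    · intro h σ
      obtain ⟨g, hg, hgτ⟩ := h σ
      rw [← hgτ, mul_smul, mul_smul, inv_smul_smul, hg]
    · intro h σ
      refine ⟨σ⁻¹ * τ * σ, ?_, by group⟩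
      rw [mul_smul, mul_smul, h σ, inv_smul_smul]
  -- membership in fixedField
  have hmemfix : ∀ (H : Subgroup (F ≃ₐ[E] F)) (x : F),
      x ∈ IntermediateField.fixedField H ↔ ∀ g ∈ H, g x = x := by
    intro H x
    constructor
    · intro hx g hg; exact hx ⟨g, hg⟩
    · intro hx g; exact hx g.1 g.2
  -- the fixing subgroup of K' is the image of J
  have hfix : K'.fixingSubgroup = Subgroup.map e.toMonoidHom J := by
    apply le_antisymm
    · intro g hg
      rw [IntermediateField.mem_fixingSubgroup_iff] at hg
      refine ⟨e.symm g, (hJ _).2 fun σ => ?_, e.apply_symm_apply g⟩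
      rw [← he_apply, e.apply_symm_apply]
      exact hg _ (IntermediateField.subset_adjoin _ _ ⟨σ, rfl⟩)
    · rw [← IntermediateField.le_iff_le, hK'def, IntermediateField.adjoin_le_iff]
      rintro x ⟨σ, rfl⟩
      rw [SetLike.mem_coe, hmemfix]
      rintro g ⟨τ, hτ, rfl⟩
      rw [MulEquiv.coe_toMonoidHom, he_apply]
      exact (hJ τ).1 hτ σ
  -- identify the left-hand side with K' as subfields
  have hcoeE : (SetLike.coe (fixedSubfield L F (⊤ : Subgroup L)) : Set F)
      = Set.range (algebraMap E F) := by
    ext x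
    constructor
    · intro hx
      exact ⟨⟨x, fun σ => hx σ (Subgroup.mem_top σ)⟩, rfl⟩
    · rintro ⟨⟨y, hy⟩, rfl⟩
      exact fun σ _ => hy σ
  have hK : Subfield.closure
      (SetLike.coe (fixedSubfield L F (⊤ : Subgroup L)) ∪ S) = K'.toSubfield := by
    rw [hcoeE, hK'def, IntermediateField.adjoin_toSubfield]
  -- conclude
  ext x
  rw [← Subfield.mem_carrier, hK]
  have hgalois := IsGalois.fixedField_fixingSubgroup K'
  constructor
  · intro hx τ hτ
    rw [← he_apply]
    have hxK' : x ∈ K' := hx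
    rw [← hgalois, hmemfix] at hxK'
    exact hxK' (e τ) (hfix ▸ ⟨τ, hτ, rfl⟩)
  · intro hx
    show x ∈ K'
    rw [← hgalois, hmemfix, hfix]
    rintro g ⟨τ, hτ, rfl⟩
    rw [MulEquiv.coe_toMonoidHom, he_apply]
    exact hx τ hτ
end

section
/- Assume the field k is infinite, and let H ≤ L be subgroups of S_n. Then there exists a polynomial P ∈ k[x_1,…,x_n] such that Stab_L(P) := {σ ∈ L : σ·P = P} = H and the map from the left cosets L/H to K sending σH to aeval α (σ·P) is well defined and injective; i.e. there exists an H-invariant L-primitive polynomial whose L-relative resolvent of α has no multiple root. -/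
open MvPolynomial

/-- Interpolation: a polynomial taking value 1 at `a₀` and 0 on a finite set `T` avoiding `a₀`. -/
private lemma aux_interp {K : Type*} [Field K] {n : ℕ} (a₀ : Fin n → K)
    (T : Finset (Fin n → K)) (hT : a₀ ∉ T) :
    ∃ Q : MvPolynomial (Fin n) K, aeval a₀ Q = 1 ∧ ∀ p ∈ T, aeval p Q = 0 := by
  classical
  induction T using Finset.induction_on with
  | empty => exact ⟨1, by simp, by simp⟩
  | @insert p T hpT ih =>
    have ha₀T : a₀ ∉ T := fun h => hT (Finset.mem_insert_of_mem h)
    have hne : a₀ ≠ p := fun h => hT (h ▸ Finset.mem_insert_self p T)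
    obtain ⟨Q, hQ1, hQ0⟩ := ih ha₀T
    have : ∃ i, a₀ i ≠ p i := by
      by_contra hcon
      push_neg at hcon
      exact hne (funext hcon)
    obtain ⟨i, hi⟩ := this
    refine ⟨Q * (C (a₀ i - p i)⁻¹ * (X i - C (p i))), ?_, ?_⟩
    · simp [show eval a₀ Q = 1 from hQ1, inv_mul_cancel₀ (sub_ne_zero.2 hi)]
    · intro p' hp'
      rcases Finset.mem_insert.1 hp' with h | h
      · subst h; simp
      · simp [show eval p' Q = 0 from hQ0 p' h]

/-- Separation of two disjoint finite sets of points by a single monomial power-sum. -/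
private lemma aux_sep_monomial {K : Type*} [Field K] {n : ℕ} (A B : Finset (Fin n → K))
    (hA : A.Nonempty) (hAB : Disjoint A B) :
    ∃ d : Fin n →₀ ℕ,
      (∑ a ∈ A, ∏ i, a i ^ d i) ≠ ∑ b ∈ B, ∏ i, b i ^ d i := by
  classical
  by_contra hcon
  push_neg at hcon
  have key : ∀ Q : MvPolynomial (Fin n) K,
      ∑ a ∈ A, aeval a Q = ∑ b ∈ B, aeval b Q := by
    have h : (∑ a ∈ A, (aeval (R := K) a).toLinearMap :
        MvPolynomial (Fin n) K →ₗ[K] K) = ∑ b ∈ B, (aeval b).toLinearMap := by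
      apply MvPolynomial.linearMap_ext
      intro d
      apply LinearMap.ext
      intro c
      simp only [LinearMap.coe_comp, Function.comp_apply, LinearMap.sum_apply,
        AlgHom.toLinearMap_apply, aeval_monomial, Algebra.algebraMap_self, RingHom.id_apply,
        Finsupp.prod_pow]
      rw [← Finset.mul_sum, ← Finset.mul_sum, hcon d]
    intro Q
    have := LinearMap.congr_fun h Q
    simpa using this
  obtain ⟨a₀, ha₀⟩ := hA
  have ha₀' : a₀ ∉ (A.erase a₀) ∪ B := by
    simp only [Finset.mem_union, Finset.mem_erase, not_or]
    exact ⟨fun h => h.1 rfl, Finset.disjoint_left.1 hAB ha₀⟩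
  obtain ⟨Q, hQ1, hQ0⟩ := aux_interp a₀ ((A.erase a₀) ∪ B) ha₀'
  have hL : ∑ a ∈ A, aeval a Q = 1 := by
    rw [← Finset.add_sum_erase A _ ha₀, hQ1]
    rw [Finset.sum_eq_zero (fun p hp => hQ0 p (Finset.mem_union_left _ hp))]
    ring
  have hR : ∑ b ∈ B, aeval b Q = 0 :=
    Finset.sum_eq_zero (fun p hp => hQ0 p (Finset.mem_union_right _ hp))
  rw [key Q, hR] at hL
  exact one_ne_zero hL.symm

set_option maxHeartbeats 1000000 in
/-- over an infinite field there is an `H`-invariant `L`-primitive polynomial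
whose `L`-relative resolvent of `α` has no multiple root. -/
theorem exists_separable_resolvent_invariant (k : Type*) {K : Type*} [Field k] [Field K]
    [Algebra k K] [Infinite k] {n : ℕ}
    (α : Fin n → K) (hinj : Function.Injective α)
    (hcoeff : ∀ m : ℕ, (∏ i : Fin n, (Polynomial.X - Polynomial.C (α i)) : Polynomial K).coeff m ∈
      (algebraMap k K).range)
    (hgen : Algebra.adjoin k (Set.range α) = ⊤)
    (H L : Subgroup (Equiv.Perm (Fin n))) (hHL : H ≤ L) :
    ∃ P : MvPolynomial (Fin n) k,
      (∀ σ ∈ L, (rename ⇑σ P = P ↔ σ ∈ H)) ∧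
      (∀ σ ∈ L, ∀ τ ∈ L,
        (MvPolynomial.aeval α (rename ⇑σ P) = MvPolynomial.aeval α (rename ⇑τ P) ↔
          σ⁻¹ * τ ∈ H)) := by
  classical
  set G := Equiv.Perm (Fin n)
  -- the finset of elements of `H`
  set Hf : Finset G := Finset.univ.filter (· ∈ H) with hHf
  have memHf : ∀ τ : G, τ ∈ Hf ↔ τ ∈ H := by
    intro τ; simp [hHf]
  have Hf1 : (1 : G) ∈ Hf := (memHf 1).2 H.one_mem
  -- the H-symmetrized monomial
  set Psym : (Fin n →₀ ℕ) → MvPolynomial (Fin n) k :=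
    fun d => ∑ τ ∈ Hf, rename ⇑τ (monomial d (1 : k)) with hPsym
  -- H-invariance of Psym
  have hPinv : ∀ (d : Fin n →₀ ℕ) (σ : G), σ ∈ H →
      rename ⇑σ (Psym d) = Psym d := by
    intro d σ hσ
    rw [hPsym]
    simp only [map_sum]
    refine Finset.sum_nbij' (fun τ => σ * τ) (fun τ => σ⁻¹ * τ) ?_ ?_ ?_ ?_ ?_
    · intro τ hτ
      exact (memHf _).2 (H.mul_mem hσ ((memHf _).1 hτ))
    · intro τ hτ
      exact (memHf _).2 (H.mul_mem (H.inv_mem hσ) ((memHf _).1 hτ))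
    · intro τ _; rw [inv_mul_cancel_left]
    · intro τ _; rw [mul_inv_cancel_left]
    · intro τ _
      rw [rename_rename]
      rw [← Equiv.Perm.coe_mul]
  -- value of the renamed Psym under aeval
  have hval : ∀ (d : Fin n →₀ ℕ) (g : G),
      MvPolynomial.aeval α (rename ⇑g (Psym d)) =
        ∑ τ ∈ Hf, ∏ i, α ((g * τ) i) ^ d i := by
    intro d g
    rw [hPsym]
    simp only [map_sum]
    refine Finset.sum_congr rfl ?_
    intro τ _
    rw [rename_rename, aeval_rename, aeval_monomial]
    simp only [map_one, one_mul, Finsupp.prod_pow]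
    rfl
  -- separation of a pair of cosets by some monomial d
  have pair : ∀ g g' : G, g⁻¹ * g' ∉ H →
      ∃ d : Fin n →₀ ℕ,
        MvPolynomial.aeval α (rename ⇑g (Psym d)) ≠
          MvPolynomial.aeval α (rename ⇑g' (Psym d)) := by
    intro g g' hgg'
    have hinj2 : ∀ h : G, Function.Injective fun τ : G => α ∘ ⇑(h * τ) := by
      intro h τ τ' hττ'
      have : ∀ i, α ((h * τ) i) = α ((h * τ') i) := fun i => congrFun hττ' i
      have h2 : ∀ i, (h * τ) i = (h * τ') i := fun i => hinj (this i)
      have : h * τ = h * τ' := Equiv.ext h2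
      exact mul_left_cancel this
    set A : Finset (Fin n → K) := Hf.image (fun τ => α ∘ ⇑(g * τ)) with hA
    set B : Finset (Fin n → K) := Hf.image (fun τ => α ∘ ⇑(g' * τ)) with hB
    have hAne : A.Nonempty := ⟨α ∘ ⇑(g * 1), Finset.mem_image_of_mem _ Hf1⟩
    have hdisj : Disjoint A B := by
      rw [Finset.disjoint_left]
      intro x hxA hxB
      obtain ⟨τ, hτ, hx1⟩ := Finset.mem_image.1 hxA
      obtain ⟨τ', hτ', hx2⟩ := Finset.mem_image.1 hxB
      have heq : α ∘ ⇑(g * τ) = α ∘ ⇑(g' * τ') := hx1.trans hx2.symm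
      have h2 : ∀ i, (g * τ) i = (g' * τ') i := fun i => hinj (congrFun heq i)
      have h3 : g * τ = g' * τ' := Equiv.ext h2
      apply hgg'
      have h4 : (g * τ) * τ'⁻¹ = g' := by rw [h3, mul_inv_cancel_right]
      have : g⁻¹ * g' = τ * τ'⁻¹ := by rw [← h4, ← mul_assoc, inv_mul_cancel_left]
      rw [this]
      exact H.mul_mem ((memHf _).1 hτ) (H.inv_mem ((memHf _).1 hτ'))
    obtain ⟨d, hd⟩ := aux_sep_monomial A B hAne hdisj
    refine ⟨d, ?_⟩
    rw [hval d g, hval d g']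
    rw [hA] at hd
    rw [hB] at hd
    rw [Finset.sum_image (fun a ha b hb hab => hinj2 g hab),
      Finset.sum_image (fun a ha b hb hab => hinj2 g' hab)] at hd
    simpa using hd
  -- choice of separating monomial for each bad pair
  set D : G × G → (Fin n →₀ ℕ) := fun pr =>
    if h : pr.1⁻¹ * pr.2 ∉ H then (pair pr.1 pr.2 h).choose else 0 with hD
  have hDspec : ∀ pr : G × G, pr.1⁻¹ * pr.2 ∉ H →
      MvPolynomial.aeval α (rename ⇑pr.1 (Psym (D pr))) ≠
        MvPolynomial.aeval α (rename ⇑pr.2 (Psym (D pr))) := by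
    intro pr h
    rw [hD]
    simp only [h, not_false_iff, dif_pos]
    exact (pair pr.1 pr.2 h).choose_spec
  -- the finset of bad pairs
  set PS : Finset (G × G) := Finset.univ.filter (fun pr => pr.1⁻¹ * pr.2 ∉ H) with hPS
  have memPS : ∀ pr : G × G, pr ∈ PS ↔ pr.1⁻¹ * pr.2 ∉ H := by
    intro pr; simp [hPS]
  -- an injective enumeration of pairs
  set j : G × G → ℕ := fun pr => (Fintype.equivFin (G × G) pr : ℕ) with hj
  have hjinj : Function.Injective j := by
    intro a b hab
    exact (Fintype.equivFin (G × G)).injective (Fin.ext hab)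
  -- the polynomial (in one variable over K) controlling the pair pr
  set q : G × G → Polynomial K := fun pr =>
    ∑ pr' ∈ PS, Polynomial.C
        (MvPolynomial.aeval α (rename ⇑pr.1 (Psym (D pr'))) -
          MvPolynomial.aeval α (rename ⇑pr.2 (Psym (D pr')))) *
      Polynomial.X ^ (j pr') with hq
  have hqcoeff : ∀ pr ∈ PS, (q pr).coeff (j pr) =
      MvPolynomial.aeval α (rename ⇑pr.1 (Psym (D pr))) -
        MvPolynomial.aeval α (rename ⇑pr.2 (Psym (D pr))) := by
    intro pr hpr
    rw [hq]
    simp only [Polynomial.finset_sum_coeff, Polynomial.coeff_C_mul, Polynomial.coeff_X_pow]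
    rw [Finset.sum_eq_single pr]
    · simp
    · intro pr' _ hne
      rw [if_neg (fun h => hne (hjinj h.symm)), mul_zero]
    · intro h; exact absurd hpr h
  have hqne : ∀ pr ∈ PS, q pr ≠ 0 := by
    intro pr hpr hq0
    have h1 := hqcoeff pr hpr
    rw [hq0] at h1
    simp only [Polynomial.coeff_zero] at h1
    exact hDspec pr ((memPS pr).1 hpr) (by rw [eq_comm, sub_eq_zero] at h1; exact h1)
  -- the bad set of parameters t
  have halg : Function.Injective (algebraMap k K) := (algebraMap k K).injective
  set bad : Finset k := PS.biUnion
    (fun pr => ((q pr).roots.toFinset.preimage (algebraMap k K) halg.injOn)) with hbad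
  obtain ⟨t, ht⟩ := Infinite.exists_notMem_finset bad
  -- the final polynomial
  set P : MvPolynomial (Fin n) k :=
    ∑ pr ∈ PS, C (t ^ j pr) * Psym (D pr) with hP
  -- H-invariance of P
  have hPinv' : ∀ σ : G, σ ∈ H → rename ⇑σ P = P := by
    intro σ hσ
    rw [hP]
    simp only [map_sum, map_mul, rename_C]
    exact Finset.sum_congr rfl fun pr _ => by rw [hPinv (D pr) σ hσ]
  -- value of renamed P
  have hvalP : ∀ g : G, MvPolynomial.aeval α (rename ⇑g P) =
      ∑ pr ∈ PS, algebraMap k K t ^ j pr *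
        MvPolynomial.aeval α (rename ⇑g (Psym (D pr))) := by
    intro g
    rw [hP]
    simp only [map_sum, map_mul, rename_C, aeval_C, map_pow]
  -- key separation fact
  have fact1 : ∀ σ τ : G, σ⁻¹ * τ ∉ H →
      MvPolynomial.aeval α (rename ⇑σ P) ≠ MvPolynomial.aeval α (rename ⇑τ P) := by
    intro σ τ hστ heq
    have hpr : (σ, τ) ∈ PS := (memPS (σ, τ)).2 hστ
    have heval : (q (σ, τ)).eval (algebraMap k K t) = 0 := by
      rw [hq]
      simp only [Polynomial.eval_finset_sum, Polynomial.eval_mul, Polynomial.eval_C,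
        Polynomial.eval_pow, Polynomial.eval_X]
      have : ∀ pr' ∈ PS,
          (MvPolynomial.aeval α (rename ⇑σ (Psym (D pr'))) -
            MvPolynomial.aeval α (rename ⇑τ (Psym (D pr')))) * algebraMap k K t ^ j pr' =
          algebraMap k K t ^ j pr' * MvPolynomial.aeval α (rename ⇑σ (Psym (D pr'))) -
            algebraMap k K t ^ j pr' * MvPolynomial.aeval α (rename ⇑τ (Psym (D pr'))) := by
        intro pr' _; ring
      rw [Finset.sum_congr rfl this, Finset.sum_sub_distrib]
      rw [← hvalP σ, ← hvalP τ, heq, sub_self]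
    have : algebraMap k K t ∈ (q (σ, τ)).roots :=
      (Polynomial.mem_roots (hqne _ hpr)).2 heval
    have htbad : t ∈ bad := by
      rw [hbad]
      refine Finset.mem_biUnion.2 ⟨(σ, τ), hpr, ?_⟩
      rw [Finset.mem_preimage]
      exact Multiset.mem_toFinset.2 this
    exact ht htbad
  -- invariance under H-translation
  have fact2 : ∀ σ τ : G, σ⁻¹ * τ ∈ H → rename ⇑τ P = rename ⇑σ P := by
    intro σ τ hστ
    have hτ : τ = σ * (σ⁻¹ * τ) := by rw [mul_inv_cancel_left]
    rw [hτ, Equiv.Perm.coe_mul, ← rename_rename, hPinv' _ hστ]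
  refine ⟨P, ?_, ?_⟩
  · intro σ _
    constructor
    · intro hren
      by_contra hσH
      have h1 : σ⁻¹ * 1 ∉ H := by
        simpa [H.inv_mem_iff] using hσH
      have := fact1 σ 1 h1
      apply this
      rw [hren, Equiv.Perm.coe_one, rename_id, AlgHom.id_apply]
    · intro hσH
      have : σ⁻¹ * 1 ∈ H := by simpa [H.inv_mem_iff] using hσH
      have h2 := fact2 1 σ (by simpa [H.inv_mem_iff] using hσH)
      rw [h2, Equiv.Perm.coe_one, rename_id, AlgHom.id_apply]
  · intro σ _ τ _
    constructor
    · intro heq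
      by_contra hστ
      exact fact1 σ τ hστ heq
    · intro hστ
      rw [fact2 σ τ hστ]
end

section
/- Assume k is infinite and that the map C ↦ β_C from L/H to K is injective. Let 𝔐_β be the kernel of the evaluation homomorphism from the multivariate polynomial ring k[(y_C)_{C ∈ L/H}] to K sending y_C to β_C, and let the group Perm(L/H) of permutations of L/H act on this ring by permuting the variables. Then {π ∈ Perm(L/H) : π·𝔐_β = 𝔐_β} (the Galois group of the family (β_C) over k) equals the image of the homomorphism G → Perm(L/H) sending g ∈ G to the permutation C ↦ gC given by left multiplication. -/
open MvPolynomial Polynomial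

variable (k : Type*) {K : Type*} [Field k] [Field K] [Algebra k K] {n : ℕ}

section Helpers

variable {ι : Type*}

/-- If an ideal is mapped into itself by `rename e` and `rename e.symm`, then `rename e`
maps it onto itself. -/
lemma rename_image_eq_of_le (e : Equiv.Perm ι) (I : Ideal (MvPolynomial ι k))
    (h1 : ∀ Q ∈ I, rename ⇑e Q ∈ I) (h2 : ∀ Q ∈ I, rename ⇑e.symm Q ∈ I) :
    rename ⇑e '' (I : Set (MvPolynomial ι k)) = I := by
  apply subset_antisymm
  · rintro _ ⟨Q, hQ, rfl⟩
    exact h1 Q hQ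
  · intro Q hQ
    refine ⟨rename ⇑e.symm Q, h2 Q hQ, ?_⟩
    rw [rename_rename, Equiv.self_comp_symm, rename_id]; rfl

/-- Extension lemma: an inclusion of kernels of evaluations yields an endomorphism of a
normal extension carrying one family to the other. -/
lemma exists_algHom_of_ker_le [Normal k K] (γ δ : ι → K)
    (h : RingHom.ker (aeval γ : MvPolynomial ι k →ₐ[k] K)
       ≤ RingHom.ker (aeval δ : MvPolynomial ι k →ₐ[k] K)) :
    ∃ Φ : K →ₐ[k] K, ∀ i, Φ (γ i) = δ i := by
  have halg : Algebra.IsAlgebraic k K := inferInstance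
  set f : MvPolynomial ι k →ₐ[k] K := aeval γ with hf
  let e : (MvPolynomial ι k ⧸ RingHom.ker f) ≃ₐ[k] f.range := Ideal.quotientKerEquivRange f
  let χ₀ : f.range →ₐ[k] K :=
    (Ideal.Quotient.liftₐ (RingHom.ker f) (aeval δ) fun a ha => h ha).comp e.symm.toAlgHom
  have hSalg : f.range.IsAlgebraic := fun x _ => halg.isAlgebraic x
  let F : IntermediateField k K := hSalg.toIntermediateField
  obtain ⟨Φ, hΦ⟩ := IntermediateField.exists_algHom_of_splits
    (fun s => normal_iff.mp ‹Normal k K› s) (show ↥F →ₐ[k] K from χ₀)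
  refine ⟨Φ, fun i => ?_⟩
  have hmem : γ i ∈ f.range := ⟨X i, by simp [hf]⟩
  have h1 : Φ (γ i) = χ₀ ⟨γ i, hmem⟩ := DFunLike.congr_fun hΦ (⟨γ i, hmem⟩ : ↥F)
  rw [h1]
  have h2 : e.symm ⟨γ i, hmem⟩ = Ideal.Quotient.mk (RingHom.ker f) (X i) := by
    rw [AlgEquiv.symm_apply_eq]
    ext
    simp [e, Ideal.quotientKerEquivRange, hf]
  show (Ideal.Quotient.liftₐ (RingHom.ker f) (aeval δ) fun a ha => h ha) (e.symm ⟨γ i, hmem⟩) = δ i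
  rw [h2]
  exact aeval_X δ i

/-- The hypotheses of the main theorem imply that `K` is normal over `k`. -/
lemma normal_of_prod_roots (α : Fin n → K)
    (hcoeff : ∀ m : ℕ, (∏ i : Fin n, (Polynomial.X - Polynomial.C (α i)) : K[X]).coeff m ∈
      (algebraMap k K).range)
    (hgen : Algebra.adjoin k (Set.range α) = ⊤) : Normal k K := by
  set fK : K[X] := ∏ i : Fin n, (Polynomial.X - Polynomial.C (α i)) with hfK
  have hmonic : fK.Monic := monic_prod_of_monic _ _ fun i _ => monic_X_sub_C _
  have hlifts : fK ∈ Polynomial.lifts (algebraMap k K) :=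
    (Polynomial.lifts_iff_coeff_lifts _).mpr fun m => hcoeff m
  obtain ⟨f₀, hmap, hdeg, hm0⟩ := Polynomial.lifts_and_degree_eq_and_monic hlifts hmonic
  have hroots : fK.roots = Finset.univ.val.map α := by
    rw [hfK, Finset.prod_eq_multiset_prod,
      show (Multiset.map (fun i => Polynomial.X - Polynomial.C (α i)) Finset.univ.val)
        = Multiset.map (fun a => Polynomial.X - Polynomial.C a)
          (Multiset.map α Finset.univ.val) from by rw [Multiset.map_map]; rfl]
    exact roots_multiset_prod_X_sub_C _
  have hsplit : fK.Splits := Splits.prod fun i _ => Splits.X_sub_C _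
  have : IsSplittingField k K f₀ := by
    constructor
    · rw [hmap]; exact hsplit
    · rw [show f₀.rootSet K = Set.range α from ?_]
      · exact hgen
      · ext x
        simp [Polynomial.rootSet, Polynomial.aroots, hmap, hroots, List.mem_ofFn, eq_comm]
  exact Normal.of_isSplittingField f₀

/-- Any `k`-algebra endomorphism of `K` permutes the family `α`. -/
lemma exists_perm_of_algHom (α : Fin n → K) (hinj : Function.Injective α)
    (hcoeff : ∀ m : ℕ, (∏ i : Fin n, (Polynomial.X - Polynomial.C (α i)) : K[X]).coeff m ∈
      (algebraMap k K).range)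
    (Φ : K →ₐ[k] K) : ∃ g : Equiv.Perm (Fin n), ∀ i, Φ (α i) = α (g i) := by
  set fK : K[X] := ∏ i : Fin n, (Polynomial.X - Polynomial.C (α i)) with hfK
  have hmonic : fK.Monic := monic_prod_of_monic _ _ fun i _ => monic_X_sub_C _
  have hlifts : fK ∈ Polynomial.lifts (algebraMap k K) :=
    (Polynomial.lifts_iff_coeff_lifts _).mpr fun m => hcoeff m
  obtain ⟨f₀, hmap, hdeg, hm0⟩ := Polynomial.lifts_and_degree_eq_and_monic hlifts hmonic
  have hroot : ∀ i, ∃ j, Φ (α i) = α j := by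
    intro i
    have h1 : Polynomial.aeval (α i) f₀ = 0 := by
      rw [Polynomial.aeval_def, ← Polynomial.eval_map, hmap, hfK, Polynomial.eval_prod]
      apply Finset.prod_eq_zero (Finset.mem_univ i)
      simp
    have h2 : Polynomial.aeval (Φ (α i)) f₀ = 0 := by
      rw [Polynomial.aeval_algHom_apply, h1, map_zero]
    rw [Polynomial.aeval_def, ← Polynomial.eval_map, hmap, hfK, Polynomial.eval_prod] at h2
    obtain ⟨j, -, hj⟩ := Finset.prod_eq_zero_iff.mp h2
    refine ⟨j, ?_⟩
    simpa [sub_eq_zero] using hj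
  choose g' hg' using hroot
  have hginj : Function.Injective g' := by
    intro a b hab
    apply hinj
    apply Φ.toRingHom.injective
    rw [show Φ.toRingHom (α a) = Φ (α a) from rfl, show Φ.toRingHom (α b) = Φ (α b) from rfl,
      hg', hg', hab]
  exact ⟨Equiv.ofBijective g' (Finite.injective_iff_bijective.mp hginj), hg'⟩

/-- A permutation realized by a `k`-algebra endomorphism lies in the Galois group. -/
lemma mem_galoisGroup_of_algHom [Algebra.IsAlgebraic k K] (α : Fin n → K)
    (g : Equiv.Perm (Fin n)) (Φ : K →ₐ[k] K) (hΦ : ∀ i, Φ (α i) = α (g i)) :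
    g ∈ galoisGroup k α := by
  let Φ' : K ≃ₐ[k] K := AlgEquiv.ofBijective Φ (Algebra.IsAlgebraic.algHom_bijective Φ)
  have hΦ'symm : ∀ i, Φ'.symm (α i) = α (g.symm i) := by
    intro i
    rw [AlgEquiv.symm_apply_eq]
    show α i = Φ (α (g.symm i))
    rw [hΦ, Equiv.apply_symm_apply]
  show rename ⇑g '' ((relIdeal k α : Ideal (MvPolynomial (Fin n) k)) :
    Set (MvPolynomial (Fin n) k)) = _
  apply rename_image_eq_of_le
  · intro Q hQ
    have hQ0 : (aeval α : MvPolynomial (Fin n) k →ₐ[k] K) Q = 0 := hQ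
    show (aeval α : MvPolynomial (Fin n) k →ₐ[k] K) (rename ⇑g Q) = 0
    rw [aeval_rename, show (α ∘ ⇑g) = fun i => Φ (α i) from funext fun i => (hΦ i).symm,
      ← comp_aeval_apply, hQ0, map_zero]
  · intro Q hQ
    have hQ0 : (aeval α : MvPolynomial (Fin n) k →ₐ[k] K) Q = 0 := hQ
    show (aeval α : MvPolynomial (Fin n) k →ₐ[k] K) (rename ⇑g.symm Q) = 0
    rw [aeval_rename,
      show (α ∘ ⇑g.symm) = fun i => (Φ'.symm : K →ₐ[k] K) (α i) from
        funext fun i => (hΦ'symm i).symm,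
      ← comp_aeval_apply, hQ0, map_zero]

end Helpers

/-- the Galois group of the family of roots of a separable resolvent is the
image of `G` acting by left multiplication on the cosets `L/H`. -/
theorem galoisGroup_resolvent_eq_image [Infinite k]
    (α : Fin n → K) (hinj : Function.Injective α)
    (hcoeff : ∀ m : ℕ, (∏ i : Fin n, (Polynomial.X - Polynomial.C (α i)) : K[X]).coeff m ∈
      (algebraMap k K).range)
    (hgen : Algebra.adjoin k (Set.range α) = ⊤)
    (H L : Subgroup (Equiv.Perm (Fin n))) (hHL : H ≤ L) (hGL : galoisGroup k α ≤ L)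
    (P : MvPolynomial (Fin n) k) (hstab : ∀ σ ∈ L, (rename ⇑σ P = P ↔ σ ∈ H))
    (β : (↥L ⧸ H.subgroupOf L) → K)
    (hβ : ∀ σ : ↥L, β (QuotientGroup.mk σ) =
      MvPolynomial.aeval α (rename ⇑(σ : Equiv.Perm (Fin n)) P))
    (hβinj : Function.Injective β) :
    {π : Equiv.Perm (↥L ⧸ H.subgroupOf L) |
        rename ⇑π '' ((RingHom.ker (MvPolynomial.aeval β :
            MvPolynomial (↥L ⧸ H.subgroupOf L) k →ₐ[k] K)) :
          Set (MvPolynomial (↥L ⧸ H.subgroupOf L) k)) =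
        ((RingHom.ker (MvPolynomial.aeval β :
            MvPolynomial (↥L ⧸ H.subgroupOf L) k →ₐ[k] K)) :
          Set (MvPolynomial (↥L ⧸ H.subgroupOf L) k))} =
      {π : Equiv.Perm (↥L ⧸ H.subgroupOf L) |
        ∃ (g : Equiv.Perm (Fin n)) (hg : g ∈ galoisGroup k α),
          π = MulAction.toPerm (⟨g, hGL hg⟩ : ↥L)} := by
  haveI hnormal : Normal k K := normal_of_prod_roots k α hcoeff hgen
  haveI halg : Algebra.IsAlgebraic k K := inferInstance
  set 𝔐β : Ideal (MvPolynomial (↥L ⧸ H.subgroupOf L) k) :=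
    RingHom.ker (MvPolynomial.aeval β :
      MvPolynomial (↥L ⧸ H.subgroupOf L) k →ₐ[k] K) with h𝔐β
  have hkey : ∀ (Φ : K →ₐ[k] K) (g : Equiv.Perm (Fin n)) (hgL : g ∈ L),
      (∀ i, Φ (α i) = α (g i)) →
      ∀ C : ↥L ⧸ H.subgroupOf L, β ((⟨g, hgL⟩ : ↥L) • C) = Φ (β C) := by
    intro Φ g hgL hΦ C
    obtain ⟨σ, rfl⟩ := QuotientGroup.mk_surjective C
    rw [MulAction.Quotient.smul_mk, hβ, hβ, smul_eq_mul]
    rw [show (((⟨g, hgL⟩ : ↥L) * σ : ↥L) : Equiv.Perm (Fin n))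
        = g * (σ : Equiv.Perm (Fin n)) from rfl]
    rw [show ⇑(g * (σ : Equiv.Perm (Fin n))) = ⇑g ∘ ⇑(σ : Equiv.Perm (Fin n)) from rfl]
    rw [← rename_rename, aeval_rename,
      show (α ∘ ⇑g) = fun i => Φ (α i) from funext fun i => (hΦ i).symm, ← comp_aeval_apply]
  ext π
  simp only [Set.mem_setOf_eq]
  constructor
  · intro hπ
    have hker : RingHom.ker (aeval β : MvPolynomial (↥L ⧸ H.subgroupOf L) k →ₐ[k] K)
        ≤ RingHom.ker (aeval (β ∘ ⇑π) : MvPolynomial (↥L ⧸ H.subgroupOf L) k →ₐ[k] K) := by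
      intro Q hQ
      rw [RingHom.mem_ker, ← aeval_rename]
      have hmem : rename ⇑π Q ∈ rename ⇑π '' (𝔐β : Set (MvPolynomial (↥L ⧸ H.subgroupOf L) k)) :=
        ⟨Q, hQ, rfl⟩
      rw [hπ] at hmem
      exact hmem
    obtain ⟨Φ, hΦ⟩ := exists_algHom_of_ker_le k β (β ∘ ⇑π) hker
    obtain ⟨g, hgα⟩ := exists_perm_of_algHom k α hinj hcoeff Φ
    have hg : g ∈ galoisGroup k α := mem_galoisGroup_of_algHom k α g Φ hgα
    refine ⟨g, hg, ?_⟩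
    ext C
    apply hβinj
    rw [show (MulAction.toPerm (⟨g, hGL hg⟩ : ↥L)) C = (⟨g, hGL hg⟩ : ↥L) • C from rfl,
      hkey Φ g (hGL hg) hgα C]
    exact (hΦ C).symm
  · rintro ⟨g, hg, rfl⟩
    have hkerα : RingHom.ker (aeval α : MvPolynomial (Fin n) k →ₐ[k] K)
        ≤ RingHom.ker (aeval (α ∘ ⇑g) : MvPolynomial (Fin n) k →ₐ[k] K) := by
      intro Q hQ
      rw [RingHom.mem_ker, ← aeval_rename]
      have hg' : rename ⇑g '' ((relIdeal k α : Ideal (MvPolynomial (Fin n) k)) :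
          Set (MvPolynomial (Fin n) k)) = relIdeal k α := hg
      have hmem : rename ⇑g Q ∈ rename ⇑g '' ((relIdeal k α : Ideal (MvPolynomial (Fin n) k)) :
          Set (MvPolynomial (Fin n) k)) := ⟨Q, hQ, rfl⟩
      rw [hg'] at hmem
      exact hmem
    obtain ⟨Φ, hΦ⟩ := exists_algHom_of_ker_le k α (α ∘ ⇑g) hkerα
    let Φ' : K ≃ₐ[k] K := AlgEquiv.ofBijective Φ (Algebra.IsAlgebraic.algHom_bijective Φ)
    set π : Equiv.Perm (↥L ⧸ H.subgroupOf L) := MulAction.toPerm (⟨g, hGL hg⟩ : ↥L) with hπdef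
    have hπ : ∀ C, β (π C) = Φ (β C) := fun C => hkey Φ g (hGL hg) hΦ C
    have hπsymm : ∀ C, β (π.symm C) = Φ'.symm (β C) := by
      intro C
      rw [eq_comm, AlgEquiv.symm_apply_eq]
      show β C = Φ (β (π.symm C))
      rw [← hπ (π.symm C), Equiv.apply_symm_apply]
    apply rename_image_eq_of_le
    · intro Q hQ
      have hQ0 : (aeval β : MvPolynomial (↥L ⧸ H.subgroupOf L) k →ₐ[k] K) Q = 0 := hQ
      show (aeval β : MvPolynomial (↥L ⧸ H.subgroupOf L) k →ₐ[k] K) (rename ⇑π Q) = 0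
      rw [aeval_rename, show (β ∘ ⇑π) = fun C => Φ (β C) from funext fun C => hπ C,
        ← comp_aeval_apply, hQ0, map_zero]
    · intro Q hQ
      have hQ0 : (aeval β : MvPolynomial (↥L ⧸ H.subgroupOf L) k →ₐ[k] K) Q = 0 := hQ
      show (aeval β : MvPolynomial (↥L ⧸ H.subgroupOf L) k →ₐ[k] K) (rename ⇑π.symm Q) = 0
      rw [aeval_rename, show (β ∘ ⇑π.symm) = fun C => (Φ'.symm : K →ₐ[k] K) (β C) from
          funext fun C => hπsymm C,
        ← comp_aeval_apply, hQ0, map_zero]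
end

section
/- Let σ ∈ L, β = β_{σH}, let O ⊆ L/H be the orbit of the coset σH under left multiplication by G, and c = |O|. If the restriction to O of the map C ↦ β_C is injective, then β is algebraic over k, the image in K[X] of its minimal polynomial over k equals ∏_{C ∈ O} (X − β_C), and the degree of this minimal polynomial is c. -/
open MvPolynomial Polynomial

variable (k : Type*) {K : Type*} [Field k] [Field K] [Algebra k K] {n : ℕ}

set_option maxHeartbeats 1000000 in
/-- if the values of the resolvent are pairwise distinct on the `G`-orbit `O` of
the coset `σH`, then `β = β_{σH}` is algebraic over `k` with minimal polynomial
`∏_{C ∈ O} (X - β_C)`, of degree `|O|`. -/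
theorem minpoly_root_resolvent_eq_prod_orbit
    (α : Fin n → K) (hinj : Function.Injective α)
    (hcoeff : ∀ m : ℕ, (∏ i : Fin n, (Polynomial.X - Polynomial.C (α i)) : K[X]).coeff m ∈
      (algebraMap k K).range)
    (hgen : Algebra.adjoin k (Set.range α) = ⊤)
    (H L : Subgroup (Equiv.Perm (Fin n))) (hHL : H ≤ L) (hGL : galoisGroup k α ≤ L)
    (P : MvPolynomial (Fin n) k) (hstab : ∀ σ ∈ L, (rename ⇑σ P = P ↔ σ ∈ H))
    (β : (↥L ⧸ H.subgroupOf L) → K)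
    (hβ : ∀ σ : ↥L, β (QuotientGroup.mk σ) =
      MvPolynomial.aeval α (rename ⇑(σ : Equiv.Perm (Fin n)) P))
    (σ : Equiv.Perm (Fin n)) (hσ : σ ∈ L)
    (O : Set (↥L ⧸ H.subgroupOf L))
    (hO : O = {C | ∃ (g : Equiv.Perm (Fin n)) (hg : g ∈ galoisGroup k α),
      (⟨g, hGL hg⟩ : ↥L) • (QuotientGroup.mk (⟨σ, hσ⟩ : ↥L) : ↥L ⧸ H.subgroupOf L) = C})
    (hinjO : Set.InjOn β O) :
    IsAlgebraic k (β (QuotientGroup.mk (⟨σ, hσ⟩ : ↥L))) ∧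
    ((minpoly k (β (QuotientGroup.mk (⟨σ, hσ⟩ : ↥L)))).map (algebraMap k K) =
      ∏ C ∈ (Set.toFinite O).toFinset, (Polynomial.X - Polynomial.C (β C))) ∧
    (minpoly k (β (QuotientGroup.mk (⟨σ, hσ⟩ : ↥L)))).natDegree = Nat.card O := by
  classical
  -- the polynomial f and its lift f₀ to k
  set f : K[X] := ∏ i : Fin n, (Polynomial.X - Polynomial.C (α i)) with hfdef
  have hfmonic : f.Monic := monic_prod_of_monic _ _ fun i _ => monic_X_sub_C _
  obtain ⟨f0, hf0map, -, hf0monic⟩ :=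
    Polynomial.lifts_and_degree_eq_and_monic
      ((Polynomial.lifts_iff_coeff_lifts f).2 hcoeff) hfmonic
  -- roots of f
  have hfsplit : f.Splits := Splits.prod fun i _ => Splits.X_sub_C _
  have hfroots : f.roots = (Finset.univ.image α).val := by
    have he : f = ∏ a ∈ Finset.univ.image α, (Polynomial.X - Polynomial.C a) := by
      rw [hfdef, Finset.prod_image (fun i _ j _ h => hinj h)]
    rw [he]
    exact Polynomial.roots_prod_X_sub_C _
  -- K is a splitting field of f₀
  haveI hSF : Fact True := ⟨trivial⟩
  haveI : Polynomial.IsSplittingField k K f0 := by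
    constructor
    · rw [hf0map]; exact hfsplit
    · have : f0.rootSet K = Set.range α := by
        rw [Polynomial.rootSet, Polynomial.aroots_def, hf0map, hfroots]
        ext x
        simp [List.mem_ofFn]
      rw [this, hgen]
  have hf0sep : f0.Separable := by
    rw [← Polynomial.separable_map (algebraMap k K), hf0map, hfdef]
    exact Polynomial.separable_prod_X_sub_C_iff.2 hinj
  haveI : IsGalois k K := IsGalois.of_separable_splitting_field hf0sep
  haveI : FiniteDimensional k K := Polynomial.IsSplittingField.finiteDimensional K f0
  -- fixed elements are in k
  have hfix : ∀ x : K, (∀ φ : K ≃ₐ[k] K, φ x = x) → x ∈ Set.range (algebraMap k K) := by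
    intro x hx
    have h1 : x ∈ IntermediateField.fixedField
        (IntermediateField.fixingSubgroup (⊥ : IntermediateField k K)) := by
      rw [IntermediateField.fixingSubgroup_bot]
      exact fun g => hx g
    rwa [IsGalois.fixedField_fixingSubgroup, IntermediateField.mem_bot] at h1
  -- every automorphism induces an element of the Galois group
  have hB : ∀ φ : K ≃ₐ[k] K, ∃ g : Equiv.Perm (Fin n), g ∈ galoisGroup k α ∧
      ∀ Q : MvPolynomial (Fin n) k,
        MvPolynomial.aeval α (rename ⇑g Q) = φ (MvPolynomial.aeval α Q) := by
    intro φ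
    have hroot0 : ∀ i, ∃ j, φ (α i) = α j := by
      intro i
      have h1 : Polynomial.aeval (α i) f0 = 0 := by
        rw [Polynomial.aeval_def, ← Polynomial.eval_map, hf0map, hfdef, Polynomial.eval_prod]
        exact Finset.prod_eq_zero (Finset.mem_univ i) (by simp)
      have h2 : Polynomial.aeval (φ (α i)) f0 = 0 := by
        rw [Polynomial.aeval_algHom_apply φ, h1, map_zero]
      rw [Polynomial.aeval_def, ← Polynomial.eval_map, hf0map, hfdef,
        Polynomial.eval_prod] at h2
      obtain ⟨j, -, hj⟩ := Finset.prod_eq_zero_iff.1 h2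
      exact ⟨j, by simpa [sub_eq_zero] using hj⟩
    choose u hu using hroot0
    have huinj : Function.Injective u := by
      intro i j h
      apply hinj
      apply φ.injective
      rw [hu, hu, h]
    let g : Equiv.Perm (Fin n) := Equiv.ofBijective u (Finite.injective_iff_bijective.1 huinj)
    have hgα : ∀ i, α (g i) = φ (α i) := fun i => (hu i).symm
    have hkey : ∀ Q : MvPolynomial (Fin n) k,
        MvPolynomial.aeval α (rename ⇑g Q) = φ (MvPolynomial.aeval α Q) := by
      intro Q
      rw [aeval_rename]
      rw [show (α ∘ ⇑g) = fun i => φ (α i) from funext fun i => hgα i]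
      exact (MvPolynomial.comp_aeval_apply (f := α) (φ : K →ₐ[k] K) Q).symm
    have hmemiff : ∀ Q : MvPolynomial (Fin n) k,
        Q ∈ relIdeal k α ↔ rename ⇑g Q ∈ relIdeal k α := by
      intro Q
      simp only [relIdeal, RingHom.mem_ker]
      rw [hkey Q]
      exact (EmbeddingLike.map_eq_zero_iff (f := φ)).symm
    refine ⟨g, ?_, hkey⟩
    change rename ⇑g '' (relIdeal k α : Set (MvPolynomial (Fin n) k)) = _
    ext x
    constructor
    · rintro ⟨Q, hQ, rfl⟩
      rw [SetLike.mem_coe] at hQ ⊢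
      exact (hmemiff Q).1 hQ
    · intro hx
      have hxx : rename ⇑g (rename ⇑g⁻¹ x) = x := by
        rw [rename_rename]
        have : (⇑g ∘ ⇑g⁻¹) = id := funext fun i => Equiv.apply_symm_apply g i
        rw [this, rename_id]; rfl
      refine ⟨rename ⇑g⁻¹ x, ?_, hxx⟩
      rw [SetLike.mem_coe] at hx ⊢
      exact (hmemiff _).2 (by rw [hxx]; exact hx)
  -- basic orbit facts
  set base : ↥L ⧸ H.subgroupOf L := QuotientGroup.mk (⟨σ, hσ⟩ : ↥L) with hbase
  have hObase : base ∈ O := by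
    rw [hO]
    exact ⟨1, one_mem _, by
      have : (⟨(1 : Equiv.Perm (Fin n)), hGL (one_mem _)⟩ : ↥L) = 1 := rfl
      rw [this, one_smul]⟩
  have hOsmul : ∀ g (hg : g ∈ galoisGroup k α), ∀ C ∈ O, (⟨g, hGL hg⟩ : ↥L) • C ∈ O := by
    intro g hg C hC
    rw [hO] at hC ⊢
    obtain ⟨g', hg', rfl⟩ := hC
    refine ⟨g * g', mul_mem hg hg', ?_⟩
    rw [smul_smul]
    rfl
  -- equivariance of β
  have hβequiv : ∀ (φ : K ≃ₐ[k] K) (g : Equiv.Perm (Fin n)) (hg : g ∈ galoisGroup k α),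
      (∀ Q : MvPolynomial (Fin n) k,
        MvPolynomial.aeval α (rename ⇑g Q) = φ (MvPolynomial.aeval α Q)) →
      ∀ C : ↥L ⧸ H.subgroupOf L, φ (β C) = β ((⟨g, hGL hg⟩ : ↥L) • C) := by
    intro φ g hg hφ C
    induction C using QuotientGroup.induction_on with
    | H τ =>
      have h1 : (⟨g, hGL hg⟩ : ↥L) • (QuotientGroup.mk τ : ↥L ⧸ H.subgroupOf L) =
          QuotientGroup.mk ((⟨g, hGL hg⟩ : ↥L) * τ) := rfl
      rw [h1, hβ, hβ, ← hφ]
      congr 1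
      rw [rename_rename]
      rfl
  -- any k-polynomial vanishing at β base vanishes on the orbit
  have hroot : ∀ q : k[X], Polynomial.aeval (β base) q = 0 →
      ∀ C ∈ O, Polynomial.aeval (β C) q = 0 := by
    intro q hq C hC
    rw [hO] at hC
    obtain ⟨g, hg, rfl⟩ := hC
    set Q : MvPolynomial (Fin n) k := Polynomial.aeval (rename ⇑σ P) q with hQ
    have hQmem : Q ∈ relIdeal k α := by
      have : MvPolynomial.aeval α Q = Polynomial.aeval (β base) q := by
        rw [hQ, hβ]
        exact (Polynomial.aeval_algHom_apply (MvPolynomial.aeval α) _ q).symm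
      simpa [relIdeal, RingHom.mem_ker, this] using hq
    have hmem2 : rename ⇑g Q ∈ relIdeal k α := by
      have := hg
      change rename ⇑g '' (relIdeal k α : Set (MvPolynomial (Fin n) k)) = _ at this
      rw [← SetLike.mem_coe, ← this]
      exact ⟨Q, hQmem, rfl⟩
    have h2 : (⟨g, hGL hg⟩ : ↥L) • base =
        QuotientGroup.mk ((⟨g, hGL hg⟩ : ↥L) * ⟨σ, hσ⟩) := rfl
    rw [h2, hβ]
    have h3 : rename ⇑g Q =
        Polynomial.aeval (rename ⇑(((⟨g, hGL hg⟩ : ↥L) * ⟨σ, hσ⟩ : ↥L) : Equiv.Perm (Fin n)) P) q := by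
      rw [hQ, ← Polynomial.aeval_algHom_apply (rename ⇑g) _ q, rename_rename]
      rfl
    have h4 : MvPolynomial.aeval α (rename ⇑g Q) = 0 := by
      simpa [relIdeal, RingHom.mem_ker] using hmem2
    rw [h3] at h4
    rw [← Polynomial.aeval_algHom_apply (MvPolynomial.aeval α) _ q] at h4
    exact h4
  -- the product polynomial
  set T : Finset (↥L ⧸ H.subgroupOf L) := (Set.toFinite O).toFinset with hT
  have hTmem : ∀ C, C ∈ T ↔ C ∈ O := fun C => Set.Finite.mem_toFinset _
  set Pr : K[X] := ∏ C ∈ T, (Polynomial.X - Polynomial.C (β C)) with hPr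
  have hPrmonic : Pr.Monic := monic_prod_of_monic _ _ fun i _ => monic_X_sub_C _
  -- coefficients of Pr are fixed
  have hPrcoeff : ∀ m : ℕ, Pr.coeff m ∈ Set.range (algebraMap k K) := by
    intro m
    apply hfix
    intro φ
    obtain ⟨g, hg, hφg⟩ := hB φ
    have hmap : Pr.map (φ : K →+* K) = Pr := by
      rw [hPr, Polynomial.map_prod]
      have h1 : ∀ C ∈ T, (Polynomial.X - Polynomial.C (β C)).map (φ : K →+* K) =
          Polynomial.X - Polynomial.C (β ((⟨g, hGL hg⟩ : ↥L) • C)) := by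
        intro C hC
        rw [Polynomial.map_sub, Polynomial.map_X, Polynomial.map_C]
        congr 1
        exact congrArg Polynomial.C (hβequiv φ g hg hφg C)
      rw [Finset.prod_congr rfl h1]
      refine Finset.prod_nbij (fun C => (⟨g, hGL hg⟩ : ↥L) • C) ?_ ?_ ?_ ?_
      · intro C hC
        rw [hTmem] at hC ⊢
        exact hOsmul g hg C hC
      · intro C hC C' hC' h
        exact MulAction.injective _ h
      · intro C hC
        rw [Set.mem_image]
        rw [Finset.mem_coe, hTmem, hO] at hC
        obtain ⟨g', hg', rfl⟩ := hC
        refine ⟨(⟨g⁻¹ * g', mul_mem (inv_mem (hGL hg)) (hGL hg')⟩ : ↥L) • base, ?_, ?_⟩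
        · rw [Finset.mem_coe, hTmem, hO]
          exact ⟨g⁻¹ * g', mul_mem (inv_mem hg) hg', rfl⟩
        · rw [smul_smul]
          congr 1
          ext
          simp [mul_assoc]
      · intro C hC
        rfl
    conv_rhs => rw [← hmap, Polynomial.coeff_map]
    rfl
  obtain ⟨p0, hp0map, -, hp0monic⟩ :=
    Polynomial.lifts_and_degree_eq_and_monic
      ((Polynomial.lifts_iff_coeff_lifts Pr).2 hPrcoeff) hPrmonic
  -- β base is a root of p0
  have hβroot : Polynomial.aeval (β base) p0 = 0 := by
    rw [Polynomial.aeval_def, ← Polynomial.eval_map, hp0map, hPr]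
    rw [Polynomial.eval_prod]
    exact Finset.prod_eq_zero ((hTmem base).2 hObase) (by simp)
  have hint : IsIntegral k (β base) := ⟨p0, hp0monic, hβroot⟩
  have halg : IsAlgebraic k (β base) := hint.isAlgebraic
  -- minpoly divides p0
  set q : k[X] := minpoly k (β base) with hq
  have hqmonic : q.Monic := minpoly.monic hint
  have hdvd1 : q ∣ p0 := minpoly.dvd k _ hβroot
  -- p0 divides minpoly
  have hdvd2 : p0 ∣ q := by
    rw [← Polynomial.map_dvd_map' (algebraMap k K), hp0map]
    set qm : K[X] := q.map (algebraMap k K) with hqm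
    have hqmne : qm ≠ 0 :=
      Polynomial.map_ne_zero (minpoly.ne_zero hint)
    have hM : (T.val.map β) ≤ qm.roots := by
      rw [Multiset.le_iff_count]
      intro a
      by_cases ha : a ∈ T.val.map β
      · have hnd : (T.val.map β).Nodup := by
          refine Multiset.Nodup.map_on ?_ T.nodup
          intro x hx y hy hxy
          exact hinjO ((hTmem x).1 hx) ((hTmem y).1 hy) hxy
        have h1 : (T.val.map β).count a = 1 := Multiset.count_eq_one_of_mem hnd ha
        have h2 : a ∈ qm.roots := by
          obtain ⟨C, hC, rfl⟩ := Multiset.mem_map.1 ha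
          rw [Polynomial.mem_roots hqmne, Polynomial.IsRoot.def, Polynomial.eval_map,
            ← Polynomial.aeval_def]
          exact hroot q (minpoly.aeval k _) C ((hTmem C).1 hC)
        rw [h1]
        exact Multiset.one_le_count_iff_mem.2 h2
      · rw [Multiset.count_eq_zero_of_notMem ha]
        exact Nat.zero_le _
    have hPrprod : Pr = ((T.val.map β).map fun a => Polynomial.X - Polynomial.C a).prod := by
      rw [hPr, Finset.prod_eq_multiset_prod, Multiset.map_map]
      rfl
    rw [hPrprod]
    exact dvd_trans (Multiset.prod_dvd_prod_of_le (Multiset.map_le_map hM))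
      (Polynomial.prod_multiset_X_sub_C_dvd qm)
  have hqp0 : q = p0 :=
    Polynomial.eq_of_monic_of_associated hqmonic hp0monic (associated_of_dvd_dvd hdvd1 hdvd2)
  refine ⟨halg, ?_, ?_⟩
  · rw [hqp0, hp0map]
  · have h1 : q.natDegree = Pr.natDegree := by
      rw [hqp0, ← hp0map, Polynomial.natDegree_map]
    have h2 : Pr.natDegree = T.card := by
      rw [hPr, Polynomial.natDegree_prod _ _ fun C _ => Polynomial.X_sub_C_ne_zero _]
      simp
    have h3 : Nat.card O = T.card := by
      rw [Nat.card_coe_set_eq, Set.ncard_eq_toFinset_card O]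
    rw [h1, h2, h3]
end

section
/- Let σ ∈ L, β = β_{σH}, let O ⊆ L/H be the orbit of σH under left multiplication by G, c = |O|, and F = ∏_{C ∈ O} (X − β_C) ∈ K[X]. If m is the multiplicity of β as a root of F, then m divides c and F equals the m-th power of the image in K[X] of the minimal polynomial of β over k; in particular F is the m-th power of (the image of) a monic polynomial irreducible over k, and c = m·deg(minpoly_k β). -/
open MvPolynomial Polynomial

variable (k : Type*) {K : Type*} [Field k] [Field K] [Algebra k K] {n : ℕ}

section Aux

variable (k : Type*) {K : Type*} [Field k] [Field K] [Algebra k K] {n : ℕ}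

theorem relIdeal_mem_iff (α : Fin n → K) (Q : MvPolynomial (Fin n) k) :
    Q ∈ relIdeal k α ↔ MvPolynomial.aeval α Q = 0 := by
  rw [relIdeal, RingHom.mem_ker]

theorem aux_split (α : Fin n → K) (hinj : Function.Injective α)
    (hcoeff : ∀ m : ℕ, (∏ i : Fin n, (Polynomial.X - Polynomial.C (α i)) : K[X]).coeff m ∈
      (algebraMap k K).range)
    (hgen : Algebra.adjoin k (Set.range α) = ⊤) :
    ∃ f₀ : k[X], f₀.Monic ∧
      f₀.map (algebraMap k K) = ∏ i : Fin n, (Polynomial.X - Polynomial.C (α i)) ∧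
      f₀.Separable ∧ f₀.IsSplittingField k K := by
  have hmonic : (∏ i : Fin n, (Polynomial.X - Polynomial.C (α i)) : K[X]).Monic :=
    monic_prod_of_monic _ _ fun i _ => monic_X_sub_C _
  have hl : (∏ i : Fin n, (Polynomial.X - Polynomial.C (α i)) : K[X]) ∈
      Polynomial.lifts (algebraMap k K) := by
    rw [Polynomial.lifts_iff_coeff_lifts]
    intro m
    exact hcoeff m
  obtain ⟨f₀, hmap, _, hf₀m⟩ := Polynomial.lifts_and_degree_eq_and_monic hl hmonic
  refine ⟨f₀, hf₀m, hmap, ?_, ?_, ?_⟩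
  · rw [← Polynomial.separable_map (algebraMap k K), hmap]
    exact Polynomial.separable_prod_X_sub_C_iff.mpr hinj
  · rw [hmap]
    exact Polynomial.Splits.prod fun i _ => Polynomial.Splits.X_sub_C _
  · have : f₀.rootSet K = Set.range α := by
      ext x
      rw [Polynomial.mem_rootSet', Polynomial.aeval_def, ← Polynomial.eval_map, hmap]
      constructor
      · rintro ⟨-, hx⟩
        rw [Polynomial.eval_prod, Finset.prod_eq_zero_iff] at hx
        obtain ⟨i, -, hi⟩ := hx
        simp only [Polynomial.eval_sub, Polynomial.eval_X, Polynomial.eval_C, sub_eq_zero] at hi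
        exact ⟨i, hi.symm⟩
      · rintro ⟨i, rfl⟩
        refine ⟨?_, ?_⟩
        · exact hmonic.ne_zero
        · rw [Polynomial.eval_prod]
          exact Finset.prod_eq_zero (Finset.mem_univ i) (by simp)
    rw [this]
    exact hgen

theorem exists_equiv_of_mem_galoisGroup [Normal k K] (α : Fin n → K)
    (hgen : Algebra.adjoin k (Set.range α) = ⊤)
    {g : Equiv.Perm (Fin n)} (hg : g ∈ galoisGroup k α) :
    ∃ τ : K ≃ₐ[k] K, ∀ Q : MvPolynomial (Fin n) k,
      τ (MvPolynomial.aeval α Q) = MvPolynomial.aeval α (rename ⇑g Q) := by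
  have hsurj : Function.Surjective (aeval α : MvPolynomial (Fin n) k →ₐ[k] K) := by
    rw [← AlgHom.range_eq_top, ← Algebra.adjoin_range_eq_range_aeval]; exact hgen
  have hg' : rename ⇑g '' (relIdeal k α : Set (MvPolynomial (Fin n) k))
      = (relIdeal k α : Set (MvPolynomial (Fin n) k)) := hg
  have hmem : ∀ Q ∈ relIdeal k α, rename ⇑g Q ∈ relIdeal k α := by
    intro Q hQ
    rw [← SetLike.mem_coe, ← hg']
    exact Set.mem_image_of_mem _ hQ
  have hI : ∀ Q ∈ relIdeal k α,
      ((aeval α : MvPolynomial (Fin n) k →ₐ[k] K).comp (rename ⇑g)) Q = 0 := by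
    intro Q hQ
    have := hmem Q hQ
    rwa [relIdeal, RingHom.mem_ker] at this
  let e : (MvPolynomial (Fin n) k ⧸ relIdeal k α) ≃ₐ[k] K :=
    Ideal.quotientKerAlgEquivOfSurjective hsurj
  have he : ∀ Q, e (Ideal.Quotient.mk (relIdeal k α) Q) = aeval α Q := by
    intro Q
    show Ideal.quotientKerAlgEquivOfSurjective hsurj _ = _
    rfl
  let t : K →ₐ[k] K :=
    (Ideal.Quotient.liftₐ (relIdeal k α)
      ((aeval α : MvPolynomial (Fin n) k →ₐ[k] K).comp (rename ⇑g)) hI).comp e.symm.toAlgHom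
  have ht : ∀ Q : MvPolynomial (Fin n) k,
      t (MvPolynomial.aeval α Q) = MvPolynomial.aeval α (rename ⇑g Q) := by
    intro Q
    have h1 : e.symm (MvPolynomial.aeval α Q) = Ideal.Quotient.mk (relIdeal k α) Q := by
      rw [AlgEquiv.symm_apply_eq, he]
    show (Ideal.Quotient.liftₐ _ _ hI) (e.symm (MvPolynomial.aeval α Q)) = _
    rw [h1]
    rfl
  exact ⟨AlgEquiv.ofBijective t (AlgHom.normal_bijective k K K t), fun Q => ht Q⟩

theorem rel_inv (α : Fin n → K) {τ : K ≃ₐ[k] K} {g : Equiv.Perm (Fin n)}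
    (h : ∀ Q : MvPolynomial (Fin n) k,
      τ (MvPolynomial.aeval α Q) = MvPolynomial.aeval α (rename ⇑g Q)) :
    ∀ Q : MvPolynomial (Fin n) k,
      τ.symm (MvPolynomial.aeval α Q) = MvPolynomial.aeval α (rename ⇑g⁻¹ Q) := by
  intro Q
  rw [AlgEquiv.symm_apply_eq, h, rename_rename]
  have : (⇑g ∘ ⇑g⁻¹) = id := by funext i; simp
  rw [this, rename_id]; rfl

theorem exists_mem_galoisGroup (α : Fin n → K) (hinj : Function.Injective α)
    (f₀ : k[X])
    (hmap : f₀.map (algebraMap k K) = ∏ i : Fin n, (Polynomial.X - Polynomial.C (α i)))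
    (τ : K ≃ₐ[k] K) :
    ∃ g ∈ galoisGroup k α, ∀ Q : MvPolynomial (Fin n) k,
      τ (MvPolynomial.aeval α Q) = MvPolynomial.aeval α (rename ⇑g Q) := by
  have hroot : ∀ i, ∃ j, τ (α i) = α j := by
    intro i
    have h0 : Polynomial.aeval (α i) f₀ = 0 := by
      rw [Polynomial.aeval_def, ← Polynomial.eval_map, hmap, Polynomial.eval_prod]
      exact Finset.prod_eq_zero (Finset.mem_univ i) (by simp)
    have h1 : Polynomial.aeval (τ (α i)) f₀ = 0 := by
      have h2 := Polynomial.aeval_algHom_apply (τ : K →ₐ[k] K) (α i) f₀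
      rw [h0, map_zero] at h2
      simpa using h2
    rw [Polynomial.aeval_def, ← Polynomial.eval_map, hmap, Polynomial.eval_prod,
      Finset.prod_eq_zero_iff] at h1
    obtain ⟨j, -, hj⟩ := h1
    simp only [Polynomial.eval_sub, Polynomial.eval_X, Polynomial.eval_C, sub_eq_zero] at hj
    exact ⟨j, hj⟩
  choose j hj using hroot
  have hjinj : Function.Injective j := by
    intro a b hab
    apply hinj
    apply τ.injective
    rw [hj a, hj b, hab]
  let g : Equiv.Perm (Fin n) := Equiv.ofBijective j (Finite.injective_iff_bijective.mp hjinj)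
  have key : ∀ Q : MvPolynomial (Fin n) k,
      τ (MvPolynomial.aeval α Q) = MvPolynomial.aeval α (rename ⇑g Q) := by
    intro Q
    rw [aeval_rename]
    have h2 : τ (MvPolynomial.aeval α Q) = MvPolynomial.aeval (fun i => τ (α i)) Q :=
      MvPolynomial.comp_aeval_apply (τ : K →ₐ[k] K) Q (f := α)
    have hfun : (fun i => τ (α i)) = α ∘ ⇑g := funext hj
    rw [h2, hfun]
  have keyinv := rel_inv k α key
  have haeval : ∀ Q : MvPolynomial (Fin n) k,
      (Q ∈ relIdeal k α ↔ MvPolynomial.aeval α Q = 0) := by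
    intro Q
    rw [relIdeal, RingHom.mem_ker]
  refine ⟨g, ?_, key⟩
  show rename ⇑g '' (relIdeal k α : Set (MvPolynomial (Fin n) k))
      = (relIdeal k α : Set (MvPolynomial (Fin n) k))
  apply Set.Subset.antisymm
  · rintro _ ⟨Q, hQ, rfl⟩
    have hQ' : MvPolynomial.aeval α Q = 0 := (haeval Q).mp hQ
    rw [SetLike.mem_coe, haeval, ← key, hQ', map_zero]
  · intro Q hQ
    have hQ' : MvPolynomial.aeval α Q = 0 := (haeval Q).mp hQ
    refine ⟨rename ⇑g⁻¹ Q, ?_, ?_⟩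
    · rw [SetLike.mem_coe, haeval, ← keyinv, hQ', map_zero]
    · rw [rename_rename]
      have : (⇑g ∘ ⇑g⁻¹) = id := by funext i; simp
      rw [this, rename_id]; rfl

end Aux

/-- if `β` has multiplicity `m` in the factor `F` of the resolvent attached to its
`G`-orbit, then `m` divides the cardinality `c` of the orbit and `F` is the `m`-th power of the
(image of the) minimal polynomial of `β` over `k`, which is monic and irreducible; moreover
`c = m * deg (minpoly k β)`. -/
theorem factor_eq_pow_minpoly_of_multiplicity
    (α : Fin n → K) (hinj : Function.Injective α)
    (hcoeff : ∀ m : ℕ, (∏ i : Fin n, (Polynomial.X - Polynomial.C (α i)) : K[X]).coeff m ∈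
      (algebraMap k K).range)
    (hgen : Algebra.adjoin k (Set.range α) = ⊤)
    (H L : Subgroup (Equiv.Perm (Fin n))) (hHL : H ≤ L) (hGL : galoisGroup k α ≤ L)
    (P : MvPolynomial (Fin n) k) (hstab : ∀ σ ∈ L, (rename ⇑σ P = P ↔ σ ∈ H))
    (β : (↥L ⧸ H.subgroupOf L) → K)
    (hβ : ∀ σ : ↥L, β (QuotientGroup.mk σ) =
      MvPolynomial.aeval α (rename ⇑(σ : Equiv.Perm (Fin n)) P))
    (σ : Equiv.Perm (Fin n)) (hσ : σ ∈ L)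
    (O : Set (↥L ⧸ H.subgroupOf L))
    (hO : O = {C | ∃ (g : Equiv.Perm (Fin n)) (hg : g ∈ galoisGroup k α),
      (⟨g, hGL hg⟩ : ↥L) • (QuotientGroup.mk (⟨σ, hσ⟩ : ↥L) : ↥L ⧸ H.subgroupOf L) = C})
    (c : ℕ) (hc : c = Nat.card O)
    (F : K[X])
    (hF : F = ∏ C ∈ (Set.toFinite O).toFinset, (Polynomial.X - Polynomial.C (β C)))
    (m : ℕ) (hm : m = Polynomial.rootMultiplicity (β (QuotientGroup.mk (⟨σ, hσ⟩ : ↥L))) F) :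
    m ∣ c ∧
    F = ((minpoly k (β (QuotientGroup.mk (⟨σ, hσ⟩ : ↥L)))).map (algebraMap k K)) ^ m ∧
    (minpoly k (β (QuotientGroup.mk (⟨σ, hσ⟩ : ↥L)))).Monic ∧
    Irreducible (minpoly k (β (QuotientGroup.mk (⟨σ, hσ⟩ : ↥L)))) ∧
    c = m * (minpoly k (β (QuotientGroup.mk (⟨σ, hσ⟩ : ↥L)))).natDegree := by
    classical
  obtain ⟨f₀, hf₀m, hmap, hsepf, hsf⟩ := aux_split k α hinj hcoeff hgen
  haveI : f₀.IsSplittingField k K := hsf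
  haveI : FiniteDimensional k K := Polynomial.IsSplittingField.finiteDimensional K f₀
  haveI : IsGalois k K := IsGalois.of_separable_splitting_field hsepf
  set base : ↥L ⧸ H.subgroupOf L := QuotientGroup.mk (⟨σ, hσ⟩ : ↥L) with hbase
  set β₀ : K := β base with hβ₀
  have equiv_smul : ∀ (τ : K ≃ₐ[k] K) (g : Equiv.Perm (Fin n)) (hgL : g ∈ L),
      (∀ Q : MvPolynomial (Fin n) k,
        τ (MvPolynomial.aeval α Q) = MvPolynomial.aeval α (rename ⇑g Q)) →
      ∀ C : ↥L ⧸ H.subgroupOf L, β ((⟨g, hgL⟩ : ↥L) • C) = τ (β C) := by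
    intro τ g hgL hrel C
    refine QuotientGroup.induction_on C ?_
    intro u
    rw [MulAction.Quotient.smul_mk, smul_eq_mul, hβ, hβ, hrel]
    have h1 : ((⟨g, hgL⟩ * u : ↥L) : Equiv.Perm (Fin n))
        = g * (u : Equiv.Perm (Fin n)) := rfl
    rw [h1, Equiv.Perm.coe_mul, ← rename_rename]
  have horbit_mem : ∀ (g : Equiv.Perm (Fin n)) (hg : g ∈ galoisGroup k α),
      ∀ C ∈ O, ((⟨g, hGL hg⟩ : ↥L) • C) ∈ O := by
    intro g hg C hC
    rw [hO] at hC ⊢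
    obtain ⟨g', hg', rfl⟩ := hC
    refine ⟨g * g', mul_mem hg hg', ?_⟩
    have h2 : (⟨g * g', hGL (mul_mem hg hg')⟩ : ↥L)
        = (⟨g, hGL hg⟩ : ↥L) * (⟨g', hGL hg'⟩ : ↥L) := rfl
    rw [h2, ← smul_smul]
  set Qfin : Finset (↥L ⧸ H.subgroupOf L) := (Set.toFinite O).toFinset with hQfin
  have hmemQfin : ∀ C, C ∈ Qfin ↔ C ∈ O := fun C => Set.Finite.mem_toFinset _
  have fiber_card : ∀ (τ : K ≃ₐ[k] K) (g : Equiv.Perm (Fin n)) (hg : g ∈ galoisGroup k α),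
      (∀ Q : MvPolynomial (Fin n) k,
        τ (MvPolynomial.aeval α Q) = MvPolynomial.aeval α (rename ⇑g Q)) →
      ∀ γ : K, (Qfin.filter (fun C => β C = γ)).card
        = (Qfin.filter (fun C => β C = τ γ)).card := by
    intro τ g hg hrel γ
    have hgL := hGL hg
    apply Finset.card_bij (fun C _ => (⟨g, hgL⟩ : ↥L) • C)
    · intro C hC
      rw [Finset.mem_filter] at hC ⊢
      obtain ⟨hC1, hC2⟩ := hC
      rw [hmemQfin] at hC1
      refine ⟨(hmemQfin _).mpr (horbit_mem g hg C hC1), ?_⟩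
      rw [equiv_smul τ g hgL hrel, hC2]
    · intro a _ b _ hab
      exact MulAction.injective _ hab
    · intro D hD
      rw [Finset.mem_filter] at hD
      obtain ⟨hD1, hD2⟩ := hD
      rw [hmemQfin] at hD1
      have hinvL : (⟨g, hgL⟩ : ↥L)⁻¹ = (⟨g⁻¹, hGL (inv_mem hg)⟩ : ↥L) := rfl
      refine ⟨(⟨g, hgL⟩ : ↥L)⁻¹ • D, ?_, smul_inv_smul _ _⟩
      rw [Finset.mem_filter]
      constructor
      · rw [hinvL, hmemQfin]
        exact horbit_mem g⁻¹ (inv_mem hg) D hD1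
      · rw [hinvL, equiv_smul τ.symm g⁻¹ (hGL (inv_mem hg)) (rel_inv k α hrel), hD2,
          AlgEquiv.symm_apply_apply]
  have hbase_mem : base ∈ O := by
    rw [hO]
    refine ⟨1, one_mem _, ?_⟩
    have h1 : (⟨(1 : Equiv.Perm (Fin n)), hGL (one_mem _)⟩ : ↥L) = 1 := rfl
    rw [h1, one_smul]
  have hFroots : F.roots = Qfin.val.map β := by
    have h1 : Qfin.val.map (fun C => Polynomial.X - Polynomial.C (β C))
        = (Qfin.val.map β).map (fun a => Polynomial.X - Polynomial.C a) := by
      rw [Multiset.map_map]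
      rfl
    rw [hF, Finset.prod_eq_multiset_prod, h1, Polynomial.roots_multiset_prod_X_sub_C]
  have hm' : m = (Qfin.filter (fun C => β C = β₀)).card := by
    have h1 : (Qfin.filter (fun C => β C = β₀)).card
        = Multiset.card (Qfin.val.filter (fun C => β C = β₀)) := by
      rw [Finset.card, Finset.filter_val]
    rw [hm, ← Polynomial.count_roots, hFroots, Multiset.count_map, h1]
    congr 1
    apply Multiset.filter_congr
    intro C _
    exact eq_comm
  set S : Finset K := Qfin.image β with hS
  have hfib : ∀ γ ∈ S, (Qfin.filter (fun C => β C = γ)).card = m := by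
    intro γ hγ
    rw [Finset.mem_image] at hγ
    obtain ⟨C, hC, hCγ⟩ := hγ
    rw [hmemQfin, hO] at hC
    obtain ⟨g, hg, rfl⟩ := hC
    obtain ⟨τ, hrel⟩ := exists_equiv_of_mem_galoisGroup k α hgen hg
    have hγeq : γ = τ β₀ := by rw [← hCγ, equiv_smul τ g (hGL hg) hrel base]
    rw [hγeq, ← fiber_card τ g hg hrel β₀, hm']
  have hc' : c = m * S.card := by
    rw [hc]
    have h1 : Nat.card O = Qfin.card := by
      rw [Nat.card_coe_set_eq, Set.ncard_eq_toFinset_card O (Set.toFinite O)]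
    rw [h1, Finset.card_eq_sum_card_fiberwise (fun C hC => Finset.mem_image_of_mem β hC),
      Finset.sum_congr rfl hfib, Finset.sum_const, smul_eq_mul, Nat.mul_comm]
  have hint : IsIntegral k β₀ := IsIntegral.of_finite k β₀
  have hmono : (minpoly k β₀).Monic := minpoly.monic hint
  have hirr : Irreducible (minpoly k β₀) := minpoly.irreducible hint
  have hsepμ : (minpoly k β₀).Separable := Algebra.IsSeparable.isSeparable k β₀
  set μK : K[X] := (minpoly k β₀).map (algebraMap k K) with hμKdef
  have hμKne : μK ≠ 0 := (hmono.map _).ne_zero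
  have hnodup : μK.roots.Nodup := Polynomial.nodup_roots (hsepμ.map)
  have hsplitsμ : Polynomial.Splits μK :=
    Normal.splits inferInstance β₀
  have hrootsS : μK.roots.toFinset = S := by
    apply Finset.Subset.antisymm
    · intro γ hγ
      rw [Multiset.mem_toFinset, Polynomial.mem_roots hμKne] at hγ
      have hγ0 : Polynomial.aeval γ (minpoly k β₀) = 0 := by
        rw [Polynomial.aeval_def, ← Polynomial.eval_map]
        exact hγ
      have hμeq : minpoly k β₀ = minpoly k γ :=
        minpoly.eq_of_irreducible_of_monic hirr hγ0 hmono
      have horb : γ ∈ MulAction.orbit (K ≃ₐ[k] K) β₀ :=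
        (Normal.minpoly_eq_iff_mem_orbit K).mp hμeq.symm
      obtain ⟨τ, hτ⟩ := horb
      obtain ⟨g, hg, hrel⟩ := exists_mem_galoisGroup k α hinj f₀ hmap τ
      rw [Finset.mem_image]
      refine ⟨(⟨g, hGL hg⟩ : ↥L) • base, (hmemQfin _).mpr (horbit_mem g hg base hbase_mem), ?_⟩
      rw [equiv_smul τ g (hGL hg) hrel base]
      exact hτ
    · intro γ hγ
      rw [Finset.mem_image] at hγ
      obtain ⟨C, hC, rfl⟩ := hγ
      rw [hmemQfin, hO] at hC
      obtain ⟨g, hg, rfl⟩ := hC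
      obtain ⟨τ, hrel⟩ := exists_equiv_of_mem_galoisGroup k α hgen hg
      rw [Multiset.mem_toFinset, Polynomial.mem_roots hμKne]
      rw [equiv_smul τ g (hGL hg) hrel base]
      show Polynomial.eval (τ β₀) μK = 0
      rw [hμKdef, Polynomial.eval_map, ← Polynomial.aeval_def]
      have h2 := Polynomial.aeval_algHom_apply (τ : K →ₐ[k] K) β₀ (minpoly k β₀)
      rw [minpoly.aeval, map_zero] at h2
      simpa using h2
  have hSval : S.val = μK.roots := by
    rw [← hrootsS, ← Multiset.toFinset_eq hnodup]
  have hμKprod : μK = ∏ γ ∈ S, (Polynomial.X - Polynomial.C γ) := by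
    have h0 : μK = (Multiset.map (fun a => Polynomial.X - Polynomial.C a) μK.roots).prod :=
      hsplitsμ.eq_prod_roots_of_monic (hmono.map _)
    rw [h0, Finset.prod_eq_multiset_prod, hSval]
  have hdeg : (minpoly k β₀).natDegree = S.card := by
    have h1 : μK.natDegree = (minpoly k β₀).natDegree := Polynomial.natDegree_map _
    rw [← h1, hμKprod, Polynomial.natDegree_prod _ _ (fun γ _ => Polynomial.X_sub_C_ne_zero γ)]
    simp [Polynomial.natDegree_X_sub_C]
  have hFpow : F = μK ^ m := by
    rw [hF, ← Finset.prod_fiberwise_of_maps_to (fun C hC => Finset.mem_image_of_mem β hC)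
      (fun C => Polynomial.X - Polynomial.C (β C))]
    have hinner : ∀ γ ∈ S, (∏ C ∈ Qfin.filter (fun C => β C = γ),
        (Polynomial.X - Polynomial.C (β C))) = (Polynomial.X - Polynomial.C γ) ^ m := by
      intro γ hγ
      rw [Finset.prod_congr rfl (fun C hC => by rw [(Finset.mem_filter.mp hC).2]),
        Finset.prod_const, hfib γ hγ]
    rw [Finset.prod_congr rfl hinner, Finset.prod_pow, ← hμKprod]
  refine ⟨⟨S.card, hc'⟩, hFpow, hmono, hirr, ?_⟩
  rw [hc', hdeg]
end

section
/- Let σ ∈ L, β = β_{σH}, and let O ⊆ L/H be the orbit of σH under left multiplication by G. If the restriction to O of the map C ↦ β_C is injective, then the intermediate field k⟮β⟯ generated by β over k equals the subfield of K fixed by all automorphisms Φ(g) with g ∈ G ∩ σHσ⁻¹; in particular, if G ∩ σHσ⁻¹ is the trivial group, then β is a primitive element of K over k, i.e. k⟮β⟯ = K. -/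
open MvPolynomial Polynomial

variable (k : Type*) {K : Type*} [Field k] [Field K] [Algebra k K] {n : ℕ}

/-- The subfield of `K` fixed by the automorphisms `Φ σ` for `σ ∈ H`. -/
def fixedIF (Φ : Equiv.Perm (Fin n) → (K ≃ₐ[k] K)) (H : Subgroup (Equiv.Perm (Fin n))) :
    IntermediateField k K where
  carrier := {x : K | ∀ σ ∈ H, Φ σ x = x}
  mul_mem' := by
    intro a b ha hb σ hσ
    rw [map_mul, ha σ hσ, hb σ hσ]
  one_mem' := by intro σ hσ; rw [map_one]
  add_mem' := by
    intro a b ha hb σ hσ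
    rw [map_add, ha σ hσ, hb σ hσ]
  zero_mem' := by intro σ hσ; rw [map_zero]
  algebraMap_mem' := by intro r σ hσ; exact (Φ σ).commutes r
  inv_mem' := by
    intro x hx σ hσ
    rw [map_inv₀, hx σ hσ]

section Aux

variable {k : Type*} {K : Type*} [Field k] [Field K] [Algebra k K] {n : ℕ}

lemma aux_exists_lift (α : Fin n → K)
    (hcoeff : ∀ m : ℕ, (∏ i : Fin n, (Polynomial.X - Polynomial.C (α i)) : K[X]).coeff m ∈
      (algebraMap k K).range) :
    ∃ p : k[X], p.Monic ∧ p.map (algebraMap k K) = ∏ i : Fin n, (Polynomial.X - Polynomial.C (α i)) := by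
  have hl : (∏ i : Fin n, (Polynomial.X - Polynomial.C (α i)) : K[X]) ∈ Polynomial.lifts (algebraMap k K) := by
    rw [Polynomial.lifts_iff_coeff_lifts]
    intro m; exact hcoeff m
  have hm : (∏ i : Fin n, (Polynomial.X - Polynomial.C (α i)) : K[X]).Monic :=
    monic_prod_of_monic _ _ fun i _ => monic_X_sub_C _
  obtain ⟨p, h1, _, h3⟩ := Polynomial.lifts_and_degree_eq_and_monic hl hm
  exact ⟨p, h3, h1⟩

lemma aux_rootSet {α : Fin n → K} {p : k[X]}
    (hmap : p.map (algebraMap k K) = ∏ i : Fin n, (Polynomial.X - Polynomial.C (α i))) :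
    p.rootSet K = Set.range α := by
  have hmne : p.map (algebraMap k K) ≠ 0 := by
    rw [hmap]
    exact (monic_prod_of_monic _ _ fun i _ => monic_X_sub_C _).ne_zero
  ext x
  rw [Polynomial.mem_rootSet']
  constructor
  · rintro ⟨-, hx⟩
    rw [Polynomial.aeval_def, ← Polynomial.eval_map, hmap, Polynomial.eval_prod] at hx
    simp only [Polynomial.eval_sub, Polynomial.eval_X, Polynomial.eval_C] at hx
    obtain ⟨i, -, hi⟩ := Finset.prod_eq_zero_iff.mp hx
    exact ⟨i, (sub_eq_zero.mp hi).symm⟩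
  · rintro ⟨i, rfl⟩
    refine ⟨hmne, ?_⟩
    rw [Polynomial.aeval_def, ← Polynomial.eval_map, hmap, Polynomial.eval_prod]
    exact Finset.prod_eq_zero (Finset.mem_univ i) (by simp)

lemma aux_galois (α : Fin n → K) (hinj : Function.Injective α)
    (hcoeff : ∀ m : ℕ, (∏ i : Fin n, (Polynomial.X - Polynomial.C (α i)) : K[X]).coeff m ∈
      (algebraMap k K).range)
    (hgen : Algebra.adjoin k (Set.range α) = ⊤) :
    FiniteDimensional k K ∧ IsGalois k K := by
  obtain ⟨p, hmonic, hmap⟩ := aux_exists_lift α hcoeff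
  have hsp : p.IsSplittingField k K := by
    constructor
    · rw [hmap]
      exact Polynomial.Splits.prod fun i _ => Polynomial.Splits.X_sub_C _
    · rw [aux_rootSet hmap, hgen]
  haveI := hsp
  have hsep : p.Separable := by
    rw [← Polynomial.separable_map (algebraMap k K), hmap]
    exact Polynomial.separable_prod_X_sub_C_iff.mpr hinj
  exact ⟨Polynomial.IsSplittingField.finiteDimensional K p,
    IsGalois.of_separable_splitting_field hsep⟩

/-- two k-algebra equivalences of `K` agreeing on the `α i` are equal -/
lemma aux_ext {α : Fin n → K} (hgen : Algebra.adjoin k (Set.range α) = ⊤)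
    {φ ψ : K ≃ₐ[k] K} (h : ∀ i, φ (α i) = ψ (α i)) : φ = ψ := by
  have := AlgHom.ext_of_adjoin_eq_top (φ₁ := φ.toAlgHom) (φ₂ := ψ.toAlgHom) hgen
    (by rintro _ ⟨i, rfl⟩; exact h i)
  exact AlgEquiv.ext fun x => AlgHom.congr_fun this x

/-- any `k`-automorphism of `K` permutes the `α i` via an element of the Galois group -/
lemma aux_surj (α : Fin n → K) (hinj : Function.Injective α)
    (hcoeff : ∀ m : ℕ, (∏ i : Fin n, (Polynomial.X - Polynomial.C (α i)) : K[X]).coeff m ∈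
      (algebraMap k K).range)
    (φ : K ≃ₐ[k] K) :
    ∃ τ : Equiv.Perm (Fin n), τ ∈ galoisGroup k α ∧ ∀ i, φ (α i) = α (τ i) := by
  classical
  obtain ⟨p, hmonic, hmap⟩ := aux_exists_lift α hcoeff
  -- each φ (α i) is again some α j
  have hroot : ∀ (ψ : K ≃ₐ[k] K) (i : Fin n), ∃ j, ψ (α i) = α j := by
    intro ψ i
    have hαi : α i ∈ p.rootSet K := by
      rw [aux_rootSet hmap]; exact ⟨i, rfl⟩
    have h0 : Polynomial.aeval (α i) p = 0 := (Polynomial.mem_rootSet'.mp hαi).2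
    have : ψ (α i) ∈ p.rootSet K := by
      rw [Polynomial.mem_rootSet']
      refine ⟨(Polynomial.mem_rootSet'.mp hαi).1, ?_⟩
      rw [Polynomial.aeval_algHom_apply ψ (α i) p]
      simp [h0]
    rw [aux_rootSet hmap] at this
    obtain ⟨j, hj⟩ := this
    exact ⟨j, hj.symm⟩
  choose t ht using hroot
  have htinj : ∀ ψ : K ≃ₐ[k] K, Function.Injective (t ψ) := by
    intro ψ i j hij
    apply hinj
    apply ψ.injective
    rw [ht ψ i, ht ψ j, hij]
  -- injective maps Fin n → Fin n are bijective
  have htbij : ∀ ψ : K ≃ₐ[k] K, Function.Bijective (t ψ) := fun ψ =>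
    Finite.injective_iff_bijective.mp (htinj ψ)
  set τ : Equiv.Perm (Fin n) := Equiv.ofBijective _ (htbij φ) with hτ
  have hτap : ∀ i, φ (α i) = α (τ i) := fun i => ht φ i
  refine ⟨τ, ?_, hτap⟩
  -- the image claim, for any (ψ, τ') pair
  have key : ∀ (ψ : K ≃ₐ[k] K) (τ' : Equiv.Perm (Fin n)), (∀ i, ψ (α i) = α (τ' i)) →
      rename (R := k) ⇑τ' '' (relIdeal k α : Set (MvPolynomial (Fin n) k)) ⊆
        (relIdeal k α : Set (MvPolynomial (Fin n) k)) := by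
    rintro ψ τ' hψ _ ⟨q, hq, rfl⟩
    have hq0 : MvPolynomial.aeval α q = 0 := by
      have : q ∈ relIdeal k α := hq
      rwa [relIdeal, RingHom.mem_ker] at this
    show rename ⇑τ' q ∈ relIdeal k α
    rw [relIdeal, RingHom.mem_ker]
    show MvPolynomial.aeval α (rename ⇑τ' q) = 0
    rw [aeval_rename]
    have : (α ∘ ⇑τ') = fun i => ψ (α i) := by
      funext i; exact (hψ i).symm
    rw [this]
    have h2 := comp_aeval_apply (f := α) ψ.toAlgHom q
    change ψ (MvPolynomial.aeval α q) = MvPolynomial.aeval (fun i => ψ (α i)) q at h2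
    rw [← h2, hq0, map_zero]
  have hsub₁ := key φ τ hτap
  have hinv : ∀ i, φ.symm (α i) = α (τ⁻¹ i) := by
    intro i
    apply φ.injective
    rw [hτap (τ⁻¹ i)]
    simp
  have hsub₂ := key φ.symm τ⁻¹ hinv
  show rename (R := k) ⇑τ '' (relIdeal k α : Set (MvPolynomial (Fin n) k)) =
    (relIdeal k α : Set (MvPolynomial (Fin n) k))
  refine Set.Subset.antisymm hsub₁ ?_
  intro q hq
  refine ⟨rename ⇑τ⁻¹ q, hsub₂ ⟨q, hq, rfl⟩, ?_⟩
  rw [rename_rename]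
  have : (⇑τ ∘ ⇑τ⁻¹) = id := by funext i; simp
  rw [this, rename_id]; rfl

end Aux

/-- if the resolvent values are pairwise distinct on the `G`-orbit of `σH`, then
`k⟮β⟯` is the fixed field of `G ∩ σHσ⁻¹`; in particular if `G ∩ σHσ⁻¹` is trivial then `β` is a
primitive element of `K` over `k`. -/
theorem adjoin_root_resolvent_eq_fixedField
    (α : Fin n → K) (hinj : Function.Injective α)
    (hcoeff : ∀ m : ℕ, (∏ i : Fin n, (Polynomial.X - Polynomial.C (α i)) : K[X]).coeff m ∈
      (algebraMap k K).range)
    (hgen : Algebra.adjoin k (Set.range α) = ⊤)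
    (Φ : Equiv.Perm (Fin n) → (K ≃ₐ[k] K))
    (hΦ : ∀ τ ∈ galoisGroup k α, ∀ i : Fin n, Φ τ (α i) = α (τ i))
    (H L : Subgroup (Equiv.Perm (Fin n))) (hHL : H ≤ L) (hGL : galoisGroup k α ≤ L)
    (P : MvPolynomial (Fin n) k) (hstab : ∀ σ ∈ L, (rename ⇑σ P = P ↔ σ ∈ H))
    (β : (↥L ⧸ H.subgroupOf L) → K)
    (hβ : ∀ σ : ↥L, β (QuotientGroup.mk σ) =
      MvPolynomial.aeval α (rename ⇑(σ : Equiv.Perm (Fin n)) P))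
    (σ : Equiv.Perm (Fin n)) (hσ : σ ∈ L)
    (O : Set (↥L ⧸ H.subgroupOf L))
    (hO : O = {C | ∃ (g : Equiv.Perm (Fin n)) (hg : g ∈ galoisGroup k α),
      (⟨g, hGL hg⟩ : ↥L) • (QuotientGroup.mk (⟨σ, hσ⟩ : ↥L) : ↥L ⧸ H.subgroupOf L) = C})
    (hinjO : Set.InjOn β O) :
    IntermediateField.adjoin k {β (QuotientGroup.mk (⟨σ, hσ⟩ : ↥L))} =
      fixedIF k Φ (galoisGroup k α ⊓ Subgroup.map (MulAut.conj σ).toMonoidHom H) ∧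
    (galoisGroup k α ⊓ Subgroup.map (MulAut.conj σ).toMonoidHom H = ⊥ →
      IntermediateField.adjoin k {β (QuotientGroup.mk (⟨σ, hσ⟩ : ↥L))} = ⊤) := by
  classical
  obtain ⟨hFD, hGal⟩ := aux_galois α hinj hcoeff hgen
  haveI := hFD; haveI := hGal
  set G := galoisGroup k α with hG
  set β₀ := β (QuotientGroup.mk (⟨σ, hσ⟩ : ↥L)) with hβ₀
  -- membership in the conjugate subgroup
  have hconj : ∀ g : Equiv.Perm (Fin n),
      g ∈ Subgroup.map (MulAut.conj σ).toMonoidHom H ↔ σ⁻¹ * g * σ ∈ H := by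
    intro g
    rw [Subgroup.mem_map_equiv]
    simp [MulAut.conj, mul_assoc]
  -- key : the action of Φ g on β₀
  have key : ∀ g : Equiv.Perm (Fin n), ∀ hg : g ∈ G,
      Φ g β₀ = β (QuotientGroup.mk (⟨g * σ, mul_mem (hGL hg) hσ⟩ : ↥L)) := by
    intro g hg
    rw [hβ₀, hβ, hβ]
    have hL : ∀ q : MvPolynomial (Fin n) k,
        Φ g (MvPolynomial.aeval α q) = MvPolynomial.aeval α (rename ⇑g q) := by
      intro q
      rw [aeval_rename]
      have h2 : (α ∘ ⇑g) = fun i => Φ g (α i) := funext fun i => (hΦ g hg i).symm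
      rw [h2]
      have h3 := comp_aeval_apply (f := α) (Φ g).toAlgHom q
      change Φ g (MvPolynomial.aeval α q) = MvPolynomial.aeval (fun i => Φ g (α i)) q at h3
      exact h3
    show Φ g (MvPolynomial.aeval α (rename ⇑σ P)) = MvPolynomial.aeval α (rename ⇑(g * σ) P)
    rw [hL, rename_rename]
    rfl
  -- coset equality criterion
  have hcoset : ∀ g : Equiv.Perm (Fin n), ∀ hgL : g * σ ∈ L,
      (QuotientGroup.mk (⟨g * σ, hgL⟩ : ↥L) : ↥L ⧸ H.subgroupOf L) =
        QuotientGroup.mk (⟨σ, hσ⟩ : ↥L) ↔ σ⁻¹ * g * σ ∈ H := by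
    intro g hgL
    rw [QuotientGroup.eq, Subgroup.mem_subgroupOf]
    have : (((⟨g * σ, hgL⟩ : ↥L)⁻¹ * ⟨σ, hσ⟩ : ↥L) : Equiv.Perm (Fin n))
        = σ⁻¹ * g⁻¹ * σ := by
      simp [mul_assoc]
    rw [this]
    constructor
    · intro h
      have := inv_mem h
      simpa [mul_assoc] using this
    · intro h
      have := inv_mem h
      simpa [mul_assoc] using this
  -- orbit membership
  have hmemO : ∀ g : Equiv.Perm (Fin n), ∀ hg : g ∈ G,
      (QuotientGroup.mk (⟨g * σ, mul_mem (hGL hg) hσ⟩ : ↥L) : ↥L ⧸ H.subgroupOf L) ∈ O := by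
    intro g hg
    rw [hO]
    exact ⟨g, hg, rfl⟩
  have hσO : (QuotientGroup.mk (⟨σ, hσ⟩ : ↥L) : ↥L ⧸ H.subgroupOf L) ∈ O := by
    rw [hO]
    refine ⟨1, one_mem _, ?_⟩
    simp
  -- fixing β₀ characterization for elements of G
  have hfix : ∀ g : Equiv.Perm (Fin n), ∀ hg : g ∈ G,
      (Φ g β₀ = β₀ ↔ g ∈ Subgroup.map (MulAut.conj σ).toMonoidHom H) := by
    intro g hg
    rw [key g hg, hconj, hβ₀]
    constructor
    · intro h
      rw [← hcoset g (mul_mem (hGL hg) hσ)]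
      exact hinjO (hmemO g hg) hσO h
    · intro h
      congr 1
      exact (hcoset g (mul_mem (hGL hg) hσ)).mpr h
  have main : IntermediateField.adjoin k {β₀} =
      fixedIF k Φ (G ⊓ Subgroup.map (MulAut.conj σ).toMonoidHom H) := by
    apply le_antisymm
    · rw [IntermediateField.adjoin_le_iff]
      intro x hx
      rw [Set.mem_singleton_iff] at hx
      subst hx
      intro g hg
      obtain ⟨hg1, hg2⟩ := hg
      exact (hfix g hg1).mpr hg2
    · intro x hx
      set E := IntermediateField.adjoin k {β₀} with hE
      rw [← IsGalois.fixedField_fixingSubgroup E]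
      intro φ
      -- φ : ↥(fixingSubgroup E), goal : φ • x = x
      obtain ⟨τ, hτG, hτap⟩ := aux_surj α hinj hcoeff (φ : K ≃ₐ[k] K)
      have hφτ : (φ : K ≃ₐ[k] K) = Φ τ := by
        apply aux_ext hgen
        intro i
        rw [hτap i, hΦ τ hτG i]
      have hβ₀E : β₀ ∈ E := IntermediateField.mem_adjoin_simple_self k β₀
      have hfixβ : (φ : K ≃ₐ[k] K) β₀ = β₀ :=
        (IntermediateField.mem_fixingSubgroup_iff E (φ : K ≃ₐ[k] K)).mp φ.2 β₀ hβ₀E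
      have hτH : τ ∈ Subgroup.map (MulAut.conj σ).toMonoidHom H := by
        rw [← hfix τ hτG, ← hφτ]
        exact hfixβ
      show (φ : K ≃ₐ[k] K) x = x
      rw [hφτ]
      exact hx τ ⟨hτG, hτH⟩
  refine ⟨main, fun hbot => ?_⟩
  rw [main, hbot]
  apply le_antisymm le_top
  intro x _
  intro g hg
  rw [Subgroup.mem_bot] at hg
  subst hg
  have hΦ1 : Φ 1 = AlgEquiv.refl := by
    apply aux_ext hgen
    intro i
    rw [hΦ 1 (one_mem _) i]
    rfl
  rw [hΦ1]
  rfl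
end

section
/- Let J = ⋂_{σ ∈ L} σHσ⁻¹ (the normal core of H in L). If the map C ↦ β_C from L/H to K is injective, then the intermediate field generated over k by all the β_C, C ∈ L/H, equals the subfield of K fixed by all automorphisms Φ(g) with g ∈ G ∩ J; in particular, if G ∩ J is the trivial group, then the field generated over k by the roots of the resolvent R equals K, the splitting field of f. -/
open MvPolynomial Polynomial

variable (k : Type*) {K : Type*} [Field k] [Field K] [Algebra k K] {n : ℕ}

section Aux

variable {k : Type*} {K : Type*} [Field k] [Field K] [Algebra k K] {n : ℕ}

private lemma algEquiv_eq_of_gen {α : Fin n → K}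
    (hgen : Algebra.adjoin k (Set.range α) = ⊤)
    {ψ₁ ψ₂ : K ≃ₐ[k] K} (h : ∀ i, ψ₁ (α i) = ψ₂ (α i)) : ψ₁ = ψ₂ := by
  ext x
  have hx : x ∈ Algebra.adjoin k (Set.range α) := hgen ▸ Algebra.mem_top
  induction hx using Algebra.adjoin_induction with
  | mem y hy => obtain ⟨i, rfl⟩ := hy; exact h i
  | algebraMap r => simp
  | add a b _ _ ha hb => simp [ha, hb]
  | mul a b _ _ ha hb => simp [ha, hb]

private lemma rename_mem_relIdeal {α : Fin n → K} (ψ : K ≃ₐ[k] K) (τ : Equiv.Perm (Fin n))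
    (h : ∀ i, ψ (α i) = α (τ i)) {Q : MvPolynomial (Fin n) k} (hQ : Q ∈ relIdeal k α) :
    rename ⇑τ Q ∈ relIdeal k α := by
  have key : (MvPolynomial.aeval α) (rename ⇑τ Q) = ψ ((MvPolynomial.aeval α) Q) := by
    rw [aeval_rename, show ψ ((MvPolynomial.aeval α) Q) = ψ.toAlgHom ((MvPolynomial.aeval α) Q)
      from rfl, comp_aeval_apply]
    have : (α ∘ ⇑τ) = fun i => ψ.toAlgHom (α i) := funext fun i => (h i).symm
    rw [this]
  simp only [relIdeal, RingHom.mem_ker] at hQ ⊢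
  rw [key, hQ, map_zero]

private lemma mem_galoisGroup_of {α : Fin n → K} (ψ : K ≃ₐ[k] K) (τ : Equiv.Perm (Fin n))
    (h : ∀ i, ψ (α i) = α (τ i)) : τ ∈ galoisGroup k α := by
  have hinv : ∀ i, ψ.symm (α i) = α (τ⁻¹ i) := by
    intro i
    have := h (τ⁻¹ i)
    rw [← Equiv.Perm.mul_apply, mul_inv_cancel, Equiv.Perm.one_apply] at this
    rw [← this, AlgEquiv.symm_apply_apply]
  show rename ⇑τ '' (relIdeal k α : Set (MvPolynomial (Fin n) k)) = _
  apply Set.Subset.antisymm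
  · rintro _ ⟨Q, hQ, rfl⟩
    exact rename_mem_relIdeal ψ τ h hQ
  · intro Q hQ
    refine ⟨rename ⇑τ⁻¹ Q, rename_mem_relIdeal ψ.symm τ⁻¹ hinv hQ, ?_⟩
    rw [rename_rename]
    have : (⇑τ ∘ ⇑τ⁻¹) = id := by funext i; simp
    rw [this, rename_id]; rfl

end Aux

/-- if the resolvent is separable, the field generated over `k` by its roots is
the fixed field of `G ∩ J`, `J` the normal core of `H` in `L`; in particular if `G ∩ J` is
trivial this field is all of `K`. -/
theorem adjoin_resolvent_roots_eq_fixedField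
    (α : Fin n → K) (hinj : Function.Injective α)
    (hcoeff : ∀ m : ℕ, (∏ i : Fin n, (Polynomial.X - Polynomial.C (α i)) : K[X]).coeff m ∈
      (algebraMap k K).range)
    (hgen : Algebra.adjoin k (Set.range α) = ⊤)
    (Φ : Equiv.Perm (Fin n) → (K ≃ₐ[k] K))
    (hΦ : ∀ τ ∈ galoisGroup k α, ∀ i : Fin n, Φ τ (α i) = α (τ i))
    (H L : Subgroup (Equiv.Perm (Fin n))) (hHL : H ≤ L) (hGL : galoisGroup k α ≤ L)
    (P : MvPolynomial (Fin n) k) (hstab : ∀ σ ∈ L, (rename ⇑σ P = P ↔ σ ∈ H))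
    (β : (↥L ⧸ H.subgroupOf L) → K)
    (hβ : ∀ σ : ↥L, β (QuotientGroup.mk σ) =
      MvPolynomial.aeval α (rename ⇑(σ : Equiv.Perm (Fin n)) P))
    (J : Subgroup (Equiv.Perm (Fin n)))
    (hJ : J = ⨅ σ ∈ L, Subgroup.map (MulAut.conj σ).toMonoidHom H)
    (hβinj : Function.Injective β) :
    IntermediateField.adjoin k (Set.range β) = fixedIF k Φ (galoisGroup k α ⊓ J) ∧
    (galoisGroup k α ⊓ J = ⊥ → IntermediateField.adjoin k (Set.range β) = ⊤) := by
  classical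
  -- descend f to k[X]
  obtain ⟨f₀, hf₀⟩ : ∃ q : k[X], q.map (algebraMap k K) = ∏ i : Fin n, (Polynomial.X - Polynomial.C (α i)) := by
    rw [← Polynomial.mem_lifts, Polynomial.lifts_iff_coeff_lifts]
    intro m
    exact hcoeff m
  have hf₀ne : f₀ ≠ 0 := by
    intro h0
    rw [h0, Polynomial.map_zero] at hf₀
    exact (Polynomial.monic_prod_of_monic _ _ fun i _ =>
      Polynomial.monic_X_sub_C (α i)).ne_zero hf₀.symm
  have hsep : f₀.Separable := by
    rw [← Polynomial.separable_map (algebraMap k K), hf₀]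
    exact Polynomial.separable_prod_X_sub_C_iff.2 hinj
  have hrs : f₀.rootSet K = Set.range α := by
    ext x
    rw [Polynomial.mem_rootSet, Polynomial.aeval_def, ← Polynomial.eval_map, hf₀,
      Polynomial.eval_prod]
    constructor
    · rintro ⟨-, hx⟩
      obtain ⟨i, -, hi⟩ := Finset.prod_eq_zero_iff.1 hx
      simp only [Polynomial.eval_sub, Polynomial.eval_X, Polynomial.eval_C, sub_eq_zero] at hi
      exact ⟨i, hi.symm⟩
    · rintro ⟨i, rfl⟩
      exact ⟨hf₀ne, Finset.prod_eq_zero (Finset.mem_univ i) (by simp)⟩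
  haveI hsf : f₀.IsSplittingField k K := by
    constructor
    · rw [hf₀]
      exact Polynomial.Splits.prod fun i _ => Polynomial.Splits.X_sub_C _
    · rw [hrs]
      exact hgen
  haveI : FiniteDimensional k K := Polynomial.IsSplittingField.finiteDimensional K f₀
  haveI : IsGalois k K := IsGalois.of_separable_splitting_field hsep
  -- key computation: action of Φ g on evaluations
  have hkey : ∀ g ∈ galoisGroup k α, ∀ Q : MvPolynomial (Fin n) k,
      Φ g ((MvPolynomial.aeval α) Q) = (MvPolynomial.aeval α) (rename ⇑g Q) := by
    intro g hg Q
    rw [aeval_rename, show Φ g ((MvPolynomial.aeval α) Q)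
      = (Φ g).toAlgHom ((MvPolynomial.aeval α) Q) from rfl, comp_aeval_apply]
    have : (α ∘ ⇑g) = fun i => (Φ g).toAlgHom (α i) := funext fun i => (hΦ g hg i).symm
    rw [this]
  -- action of Φ g on the β's
  have hact : ∀ g, ∀ hg : g ∈ galoisGroup k α, ∀ σ : ↥L,
      Φ g (β (QuotientGroup.mk σ)) = β (QuotientGroup.mk ((⟨g, hGL hg⟩ : ↥L) * σ)) := by
    intro g hg σ
    rw [hβ, hβ, hkey g hg, rename_rename]
    rfl
  -- membership in J
  have hJmem : ∀ g, g ∈ J ↔ ∀ σ ∈ L, σ⁻¹ * g * σ ∈ H := by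
    intro g
    rw [hJ]
    simp only [Subgroup.mem_iInf, Subgroup.mem_map, MulEquiv.coe_toMonoidHom, MulAut.conj_apply]
    constructor
    · intro h σ hσ
      obtain ⟨h', hh', heq⟩ := h σ hσ
      have : σ⁻¹ * g * σ = h' := by rw [← heq]; group
      rw [this]; exact hh'
    · intro h σ hσ
      exact ⟨σ⁻¹ * g * σ, h σ hσ, by group⟩
  -- Φ g fixes all β iff g ∈ J (for g in the Galois group)
  have hfix : ∀ g ∈ galoisGroup k α, ((∀ C, Φ g (β C) = β C) ↔ g ∈ J) := by
    intro g hg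
    constructor
    · intro h
      have hg' : ∀ σ ∈ L, σ⁻¹ * g⁻¹ * σ ∈ H := by
        intro σ hσ
        have h1 := h (QuotientGroup.mk (⟨σ, hσ⟩ : ↥L))
        rw [hact g hg ⟨σ, hσ⟩] at h1
        have h2 := hβinj h1
        rw [QuotientGroup.eq, Subgroup.mem_subgroupOf] at h2
        have e : ((((⟨g, hGL hg⟩ : ↥L) * ⟨σ, hσ⟩)⁻¹ * ⟨σ, hσ⟩ : ↥L) : Equiv.Perm (Fin n))
            = σ⁻¹ * g⁻¹ * σ := by
          simp only [Subgroup.coe_mul, InvMemClass.coe_inv]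
          group
        rw [e] at h2
        exact h2
      have hginv : g⁻¹ ∈ J := (hJmem g⁻¹).2 hg'
      simpa using J.inv_mem hginv
    · intro hgJ C
      induction C using QuotientGroup.induction_on with
      | _ σ =>
        rw [hact g hg σ]
        have : QuotientGroup.mk ((⟨g, hGL hg⟩ : ↥L) * σ)
            = (QuotientGroup.mk σ : ↥L ⧸ H.subgroupOf L) := by
          rw [QuotientGroup.eq, Subgroup.mem_subgroupOf]
          have e : ((((⟨g, hGL hg⟩ : ↥L) * σ)⁻¹ * σ : ↥L) : Equiv.Perm (Fin n))
              = (σ : Equiv.Perm (Fin n))⁻¹ * g⁻¹ * σ := by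
            simp only [Subgroup.coe_mul, InvMemClass.coe_inv]
            group
          rw [e]
          exact (hJmem g⁻¹).1 (J.inv_mem hgJ) (σ : Equiv.Perm (Fin n)) σ.2
        rw [this]
  -- E ≤ fixedIF
  have hEle : IntermediateField.adjoin k (Set.range β) ≤ fixedIF k Φ (galoisGroup k α ⊓ J) := by
    rw [IntermediateField.adjoin_le_iff]
    rintro x ⟨C, rfl⟩
    intro g hg
    rw [Subgroup.mem_inf] at hg
    exact (hfix g hg.1).2 hg.2 C
  -- fixedIF ≤ E
  have hle2 : fixedIF k Φ (galoisGroup k α ⊓ J) ≤ IntermediateField.adjoin k (Set.range β) := by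
    intro x hx
    rw [← IsGalois.fixedField_fixingSubgroup (IntermediateField.adjoin k (Set.range β))]
    rintro ⟨φ, hφ⟩
    show φ x = x
    -- φ permutes the roots
    have hroot : ∀ i, ∃ j, φ (α i) = α j := by
      intro i
      have h0 : (Polynomial.aeval (α i)) f₀ = 0 := by
        rw [Polynomial.aeval_def, ← Polynomial.eval_map, hf₀, Polynomial.eval_prod]
        exact Finset.prod_eq_zero (Finset.mem_univ i) (by simp)
      have h1 : (Polynomial.aeval (φ (α i))) f₀ = 0 := by
        rw [Polynomial.aeval_algHom_apply, h0, map_zero]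
      rw [Polynomial.aeval_def, ← Polynomial.eval_map, hf₀, Polynomial.eval_prod] at h1
      obtain ⟨j, -, hj⟩ := Finset.prod_eq_zero_iff.1 h1
      simp only [Polynomial.eval_sub, Polynomial.eval_X, Polynomial.eval_C, sub_eq_zero] at hj
      exact ⟨j, hj⟩
    choose u hu using hroot
    have huinj : Function.Injective u := fun i i' he =>
      hinj (φ.injective (by rw [hu, hu, he]))
    let σg : Equiv.Perm (Fin n) := Equiv.ofBijective u (Finite.injective_iff_bijective.1 huinj)
    have hσg : ∀ i, φ (α i) = α (σg i) := fun i => hu i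
    have hσgG : σg ∈ galoisGroup k α := mem_galoisGroup_of φ σg hσg
    have hΦσ : Φ σg = φ :=
      algEquiv_eq_of_gen hgen (fun i => by rw [hΦ σg hσgG i, hσg])
    have hfixβ : ∀ C, Φ σg (β C) = β C := by
      intro C
      rw [hΦσ]
      exact (IntermediateField.mem_fixingSubgroup_iff _ φ).1 hφ (β C)
        (IntermediateField.subset_adjoin k _ ⟨C, rfl⟩)
    have hσgJ : σg ∈ J := (hfix σg hσgG).1 hfixβ
    rw [← hΦσ]
    exact hx σg (Subgroup.mem_inf.2 ⟨hσgG, hσgJ⟩)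
  have hmain : IntermediateField.adjoin k (Set.range β)
      = fixedIF k Φ (galoisGroup k α ⊓ J) := le_antisymm hEle hle2
  refine ⟨hmain, ?_⟩
  intro htriv
  rw [hmain, htriv]
  have hΦ1 : Φ 1 = AlgEquiv.refl :=
    algEquiv_eq_of_gen hgen (fun i => by
      rw [hΦ 1 (one_mem _) i]
      simp)
  rw [eq_top_iff]
  intro x _
  intro g hg
  rw [Subgroup.mem_bot] at hg
  subst hg
  rw [hΦ1]
  rfl
end
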